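/- arXiv:1511.08453 — 2 statements merged into one kernel-verified Lean document; each statement's English description precedes it below -/
import Mathlib

section
/- Consider the one-dimensional problem −(A^ε(u^ε)')' + b(u^ε)' = f on Ω = (0,L) with homogeneous Dirichlet boundary conditions, b ≠ 0 constant, f ∈ L²(0,L), and 0 < α₁ ≤ A^ε(x) ≤ α₂ a.e. If f ≡ 1 (constant), then 0 ≤ u^ε(x) ≤ α₂L/(α₁|b|) for all x ∈ [0,L], and moreover |u^ε|²_{H¹(Ω)} ≤ α₂L²/(α₁²|b|). -/
set_option maxHeartbeats 1000000

open MeasureTheory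

open Set Filter


lemma cont_nonpos_right {f : ℝ → ℝ} {M a : ℝ} (hf : ContinuousOn f (Icc 0 M))
    (ha : a ∈ Icc 0 M) (haM : a < M) (h : ∀ t, a < t → t ≤ M → f t < 0) : f a ≤ 0 := by
  set s : ℕ → ℝ := fun n => a + (M - a) / (n + 2) with hs
  have hMa : 0 < M - a := sub_pos.2 haM
  have htends : Tendsto s atTop (nhds a) := by
    have h1 : Tendsto (fun n : ℕ => ((n : ℝ) + 2)) atTop atTop :=
      tendsto_atTop_add_const_right atTop 2 tendsto_natCast_atTop_atTop
    have h2 : Tendsto (fun n : ℕ => (M - a) / ((n : ℝ) + 2)) atTop (nhds 0) :=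
      Tendsto.div_atTop tendsto_const_nhds h1
    simpa using tendsto_const_nhds.add h2
  have hmem : ∀ n : ℕ, s n ∈ Icc 0 M ∧ a < s n ∧ s n ≤ M := by
    intro n
    have hpos : 0 < (M - a) / ((n : ℝ) + 2) := by positivity
    have hle : (M - a) / ((n : ℝ) + 2) ≤ M - a := by
      apply div_le_self hMa.le
      have : (0:ℝ) ≤ (n:ℝ) := Nat.cast_nonneg n
      linarith
    refine ⟨⟨by simp only [hs]; linarith [ha.1], by simp only [hs]; linarith⟩,
      by simp only [hs]; linarith, by simp only [hs]; linarith⟩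
  have htendsW : Tendsto s atTop (nhdsWithin a (Icc 0 M)) :=
    tendsto_nhdsWithin_of_tendsto_nhds_of_eventually_within _ htends
      (Eventually.of_forall fun n => (hmem n).1)
  have hcomp : Tendsto (f ∘ s) atTop (nhds (f a)) := (hf a ha).tendsto.comp htendsW
  exact le_of_tendsto hcomp (Eventually.of_forall fun n => (h _ (hmem n).2.1 (hmem n).2.2).le)

lemma cont_nonneg_left {f : ℝ → ℝ} {M a : ℝ} (hf : ContinuousOn f (Icc 0 M))
    (ha : a ∈ Icc 0 M) (h0a : 0 < a) (h : ∀ t, 0 ≤ t → t < a → 0 < f t) : 0 ≤ f a := by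
  set s : ℕ → ℝ := fun n => a - a / (n + 2) with hs
  have htends : Tendsto s atTop (nhds a) := by
    have h1 : Tendsto (fun n : ℕ => ((n : ℝ) + 2)) atTop atTop :=
      tendsto_atTop_add_const_right atTop 2 tendsto_natCast_atTop_atTop
    have h2 : Tendsto (fun n : ℕ => a / ((n : ℝ) + 2)) atTop (nhds 0) :=
      Tendsto.div_atTop tendsto_const_nhds h1
    simpa using tendsto_const_nhds.sub h2
  have hmem : ∀ n : ℕ, s n ∈ Icc 0 M ∧ 0 ≤ s n ∧ s n < a := by
    intro n
    have hpos : 0 < a / ((n : ℝ) + 2) := by positivity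
    have hle : a / ((n : ℝ) + 2) ≤ a := by
      apply div_le_self h0a.le
      have : (0:ℝ) ≤ (n:ℝ) := Nat.cast_nonneg n
      linarith
    refine ⟨⟨by simp only [hs]; linarith, by simp only [hs]; linarith [ha.2]⟩,
      by simp only [hs]; linarith, by simp only [hs]; linarith⟩
  have htendsW : Tendsto s atTop (nhdsWithin a (Icc 0 M)) :=
    tendsto_nhdsWithin_of_tendsto_nhds_of_eventually_within _ htends
      (Eventually.of_forall fun n => (hmem n).1)
  have hcomp : Tendsto (f ∘ s) atTop (nhds (f a)) := (hf a ha).tendsto.comp htendsW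
  exact ge_of_tendsto hcomp (Eventually.of_forall fun n => (h _ (hmem n).2.1 (hmem n).2.2).le)


lemma fubini_helper {L : ℝ} {f q : ℝ → ℝ}
    (hf : IntegrableOn f (Ioo 0 L)) (hq : IntegrableOn q (Ioo 0 L)) :
    ∫ x in Ioo 0 L, q x * ∫ t in Ioo 0 x, f t
      = ∫ t in Ioo 0 L, f t * ∫ x in Ioo t L, q x := by
  set μ := volume.restrict (Ioo (0:ℝ) L) with hμ
  set F : ℝ → ℝ → ℝ := fun x t => if t < x then q x * f t else 0 with hF
  have hunc : Function.uncurry F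
      = {p : ℝ × ℝ | p.2 < p.1}.indicator (fun p => q p.1 * f p.2) := by
    ext p
    simp [Function.uncurry, hF, Set.indicator_apply, Set.mem_setOf_eq]
  have hK : Integrable (Function.uncurry F) (μ.prod μ) := by
    rw [hunc]
    exact (hq.mul_prod hf).indicator (measurableSet_lt measurable_snd measurable_fst)
  have hswap := MeasureTheory.integral_integral_swap hK
  have hLHS : (∫ x, (∫ t, F x t ∂μ) ∂μ) = ∫ x in Ioo 0 L, q x * ∫ t in Ioo 0 x, f t := by
    refine setIntegral_congr_fun measurableSet_Ioo (fun x hx => ?_)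
    have : (fun t => F x t) = (Iio x).indicator (fun t => q x * f t) := by
      ext t; simp [hF, Set.indicator_apply]
    rw [this, setIntegral_indicator measurableSet_Iio, Set.Ioo_inter_Iio,
      min_eq_right hx.2.le, integral_const_mul]
  have hRHS : (∫ t, (∫ x, F x t ∂μ) ∂μ) = ∫ t in Ioo 0 L, f t * ∫ x in Ioo t L, q x := by
    refine setIntegral_congr_fun measurableSet_Ioo (fun t ht => ?_)
    have : (fun x => F x t) = (Ioi t).indicator (fun x => q x * f t) := by
      ext x; simp [hF, Set.indicator_apply]
    rw [this, setIntegral_indicator measurableSet_Ioi, Set.Ioo_inter_Ioi,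
      max_eq_right ht.1.le, integral_mul_const, mul_comm]
  rw [← hLHS, ← hRHS, hswap]

lemma maxPrinciple {L b c : ℝ} (hL : 0 < L) (hb : b ≠ 0)
    {u ψ A : ℝ → ℝ}
    (hrep : ∀ x ∈ Icc (0:ℝ) L, u x = ∫ t in (0:ℝ)..x, ψ t)
    (hint : IntegrableOn ψ (Ioo 0 L))
    (huL : u L = 0)
    (hAE : ∀ᵐ t ∂(volume.restrict (Ioo 0 L)), 0 < A t ∧ A t * ψ t = b * u t - t + c) :
    ∀ x ∈ Icc (0:ℝ) L, 0 ≤ u x ∧ u x ≤ L / |b| := by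
  have hu0 : u 0 = 0 := by simpa using hrep 0 ⟨le_rfl, hL.le⟩
  set φ : ℝ → ℝ := fun t => b * u t - t + c with hφdef
  have hIoc : IntegrableOn ψ (Ioc 0 L) := by
    rwa [IntegrableOn, ← Measure.restrict_congr_set Ioo_ae_eq_Ioc]
  have hIcc : IntegrableOn ψ (Icc 0 L) := by
    rw [IntegrableOn, ← Measure.restrict_congr_set Ioc_ae_eq_Icc]; exact hIoc
  have hucont : ContinuousOn u (Icc 0 L) := by
    apply (intervalIntegral.continuousOn_primitive (f := ψ) (a := 0) (b := L) (μ := volume)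
      hIcc).congr
    intro x hx
    rw [hrep x hx, intervalIntegral.integral_of_le hx.1]
  have hφcont : ContinuousOn φ (Icc 0 L) :=
    ((continuousOn_const.mul hucont).sub continuousOn_id).add continuousOn_const
  clear_value φ
  have hdiff : ∀ s x, 0 ≤ s → s ≤ x → x ≤ L → u x - u s = ∫ t in Ioo s x, ψ t := by
    intro s x h0 hsx hxL
    have h1 : IntervalIntegrable ψ volume 0 x :=
      (intervalIntegrable_iff_integrableOn_Ioc_of_le (h0.trans hsx)).2
        (hIoc.mono_set (Ioc_subset_Ioc le_rfl hxL))
    have h2 : IntervalIntegrable ψ volume 0 s :=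
      (intervalIntegrable_iff_integrableOn_Ioc_of_le h0).2
        (hIoc.mono_set (Ioc_subset_Ioc le_rfl (hsx.trans hxL)))
    rw [hrep x ⟨h0.trans hsx, hxL⟩, hrep s ⟨h0, hsx.trans hxL⟩,
      intervalIntegral.integral_interval_sub_left h1 h2,
      intervalIntegral.integral_of_le hsx, ← Measure.restrict_congr_set Ioo_ae_eq_Ioc]
  have hpos : ∀ s x, 0 ≤ s → s ≤ x → x ≤ L → (∀ t ∈ Ioo s x, 0 ≤ φ t) → u s ≤ u x := by
    intro s x h0 hsx hxL hsgn
    rw [← sub_nonneg, hdiff s x h0 hsx hxL]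
    apply MeasureTheory.setIntegral_nonneg_of_ae_restrict
    filter_upwards [ae_restrict_of_ae_restrict_of_subset (Ioo_subset_Ioo h0 hxL) hAE,
      ae_restrict_mem measurableSet_Ioo] with t ht hmem
    obtain ⟨hA0, hAψ⟩ := ht
    have h1 : 0 ≤ A t * ψ t := by rw [hAψ]; simpa [hφdef] using hsgn t hmem
    simp only [Pi.zero_apply]
    by_contra h'
    push_neg at h'
    nlinarith [mul_pos hA0 (neg_pos.2 h')]
  have hneg : ∀ s x, 0 ≤ s → s ≤ x → x ≤ L → (∀ t ∈ Ioo s x, φ t ≤ 0) → u x ≤ u s := by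
    intro s x h0 hsx hxL hsgn
    rw [← sub_nonpos, hdiff s x h0 hsx hxL]
    apply MeasureTheory.setIntegral_nonpos_of_ae_restrict
    filter_upwards [ae_restrict_of_ae_restrict_of_subset (Ioo_subset_Ioo h0 hxL) hAE,
      ae_restrict_mem measurableSet_Ioo] with t ht hmem
    obtain ⟨hA0, hAψ⟩ := ht
    have h1 : A t * ψ t ≤ 0 := by rw [hAψ]; simpa [hφdef] using hsgn t hmem
    simp only [Pi.zero_apply]
    by_contra h'
    push_neg at h'
    nlinarith [mul_pos hA0 h']
  have hbound : ∀ x ∈ Icc (0:ℝ) L, 0 ≤ u x ∧ u x ≤ L / |b| := by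
    rcases lt_or_gt_of_ne hb with hbneg | hbpos
    · -- b < 0 : {φ > 0} is a down-set
      have hdown : ∀ t₁ t₂, 0 ≤ t₁ → t₁ < t₂ → t₂ ≤ L → 0 < φ t₂ → 0 < φ t₁ := by
        intro t₁ t₂ h0 h12 h2L hpos2
        by_contra hcon
        push_neg at hcon
        set S := {t : ℝ | t ∈ Icc t₁ t₂ ∧ φ t ≤ φ t₂ / 2} with hS
        have hSne : S.Nonempty := ⟨t₁, ⟨le_rfl, h12.le⟩, by linarith⟩
        have hSbdd : BddAbove S := ⟨t₂, fun t ht => ht.1.2⟩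
        have hSclosed : IsClosed S := by
          have : S = Icc t₁ t₂ ∩ φ ⁻¹' (Iic (φ t₂ / 2)) := by
            ext t; simp [hS, Set.mem_setOf_eq, and_comm]
          rw [this]
          exact (hφcont.mono (Icc_subset_Icc h0 h2L)).preimage_isClosed_of_isClosed
            isClosed_Icc isClosed_Iic
        have hsS : sSup S ∈ S := hSclosed.csSup_mem hSne hSbdd
        set s := sSup S with hs
        have hst₂ : s < t₂ := by
          rcases hsS.1.2.lt_or_eq with h | h
          · exact h
          · exfalso; rw [h] at hsS; linarith [hsS.2]
        have hflt : ∀ t ∈ Ioo s t₂, 0 ≤ φ t := by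
          intro t ht
          by_contra h'
          push_neg at h'
          have htS : t ∈ S := ⟨⟨hsS.1.1.trans ht.1.le, ht.2.le⟩, by linarith⟩
          exact absurd (le_csSup hSbdd htS) (not_le.2 ht.1)
        have hmono : u s ≤ u t₂ := hpos s t₂ (h0.trans hsS.1.1) hst₂.le h2L hflt
        have hprod : b * (u t₂ - u s) ≤ 0 :=
          mul_nonpos_of_nonpos_of_nonneg hbneg.le (sub_nonneg.2 hmono)
        have hφs : φ t₂ < φ s := by
          simp only [hφdef]
          nlinarith
        linarith [hsS.2]
      set Sa := {t : ℝ | t ∈ Icc 0 L ∧ 0 < φ t} ∪ {(0:ℝ)} with hSa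
      have hSane : Sa.Nonempty := ⟨0, Or.inr rfl⟩
      have hSabdd : BddAbove Sa := by
        refine ⟨L, ?_⟩
        rintro t (⟨ht, _⟩ | rfl)
        · exact ht.2
        · exact hL.le
      set a := sSup Sa with ha
      have ha0 : 0 ≤ a := le_csSup hSabdd (Or.inr rfl)
      have haL : a ≤ L := csSup_le hSane (by rintro t (⟨ht, _⟩ | rfl); exacts [ht.2, hL.le])
      have hφpos : ∀ t, 0 ≤ t → t < a → 0 < φ t := by
        intro t h0t hta
        obtain ⟨s, hsSa, hst⟩ := exists_lt_of_lt_csSup hSane hta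
        rcases hsSa with ⟨hs1, hs2⟩ | rfl
        · exact hdown t s h0t hst hs1.2 hs2
        · linarith
      have hφnonpos : ∀ t, a < t → t ≤ L → φ t ≤ 0 := by
        intro t hat htL
        by_contra h
        push_neg at h
        have : t ∈ Sa := Or.inl ⟨⟨ha0.trans hat.le, htL⟩, h⟩
        exact absurd (le_csSup hSabdd this) (not_le.2 hat)
      have key : ∀ x ∈ Icc (0:ℝ) L, 0 ≤ u x ∧ u x ≤ u a := by
        intro x hx
        rcases le_total x a with hxa | hax
        · refine ⟨?_, ?_⟩
          · rw [← hu0]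
            exact hpos 0 x le_rfl hx.1 hx.2
              (fun t ht => (hφpos t ht.1.le (ht.2.trans_le hxa)).le)
          · exact hpos x a hx.1 hxa haL
              (fun t ht => (hφpos t (hx.1.trans ht.1.le) ht.2).le)
        · refine ⟨?_, ?_⟩
          · rw [← huL]
            exact hneg x L hx.1 hx.2 le_rfl
              (fun t ht => hφnonpos t (hax.trans_lt ht.1) ht.2.le)
          · exact hneg a x ha0 hax hx.2
              (fun t ht => hφnonpos t ht.1 (ht.2.le.trans hx.2))
      have hua : u a ≤ L / |b| := by
        rcases eq_or_lt_of_le ha0 with h0a | h0a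
        · rw [← h0a, hu0]; positivity
        rcases eq_or_lt_of_le haL with haL' | haL'
        · rw [haL', huL]; positivity
        · have hcL : c ≤ L := by
            have := hφnonpos L haL' le_rfl
            simp only [hφdef, huL, mul_zero] at this
            linarith
          have hφa : 0 ≤ φ a :=
            cont_nonneg_left hφcont ⟨ha0, haL⟩ h0a hφpos
          have habs : |b| = -b := abs_of_neg hbneg
          rw [habs, le_div_iff₀ (by linarith)]
          simp only [hφdef] at hφa
          nlinarith
      intro x hx
      exact ⟨(key x hx).1, (key x hx).2.trans hua⟩
    · -- b > 0 : {φ < 0} is an up-set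
      have hup : ∀ t₁ t₂, 0 ≤ t₁ → t₁ < t₂ → t₂ ≤ L → φ t₁ < 0 → φ t₂ < 0 := by
        intro t₁ t₂ h0 h12 h2L hneg1
        by_contra hcon
        push_neg at hcon
        set S := {t : ℝ | t ∈ Icc t₁ t₂ ∧ φ t₁ / 2 ≤ φ t} with hS
        have hSne : S.Nonempty := ⟨t₂, ⟨h12.le, le_rfl⟩, by linarith⟩
        have hSbdd : BddBelow S := ⟨t₁, fun t ht => ht.1.1⟩
        have hSclosed : IsClosed S := by
          have : S = Icc t₁ t₂ ∩ φ ⁻¹' (Ici (φ t₁ / 2)) := by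
            ext t; simp [hS, Set.mem_setOf_eq, and_comm]
          rw [this]
          exact (hφcont.mono (Icc_subset_Icc h0 h2L)).preimage_isClosed_of_isClosed
            isClosed_Icc isClosed_Ici
        have hsS : sInf S ∈ S := hSclosed.csInf_mem hSne hSbdd
        set s := sInf S with hs
        have hst₁ : t₁ < s := by
          rcases hsS.1.1.lt_or_eq with h | h
          · exact h
          · exfalso; rw [← h] at hsS; linarith [hsS.2]
        have hflt : ∀ t ∈ Ioo t₁ s, φ t ≤ 0 := by
          intro t ht
          by_contra h'
          push_neg at h'
          have htS : t ∈ S := ⟨⟨ht.1.le, ht.2.le.trans hsS.1.2⟩, by linarith⟩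
          exact absurd (csInf_le hSbdd htS) (not_le.2 ht.2)
        have hmono : u s ≤ u t₁ := hneg t₁ s h0 hst₁.le (hsS.1.2.trans h2L) hflt
        have hprod : b * (u s - u t₁) ≤ 0 :=
          mul_nonpos_of_nonneg_of_nonpos hbpos.le (sub_nonpos.2 hmono)
        have hφs : φ s < φ t₁ := by
          simp only [hφdef]
          nlinarith
        linarith [hsS.2]
      set Sa := {t : ℝ | t ∈ Icc 0 L ∧ φ t < 0} ∪ {L} with hSa
      have hSane : Sa.Nonempty := ⟨L, Or.inr rfl⟩
      have hSabdd : BddBelow Sa := by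
        refine ⟨0, ?_⟩
        rintro t (⟨ht, _⟩ | rfl)
        · exact ht.1
        · exact hL.le
      set a := sInf Sa with ha
      have haL : a ≤ L := csInf_le hSabdd (Or.inr rfl)
      have ha0 : 0 ≤ a := le_csInf hSane (by rintro t (⟨ht, _⟩ | rfl); exacts [ht.1, hL.le])
      have hφnonneg : ∀ t, 0 ≤ t → t < a → 0 ≤ φ t := by
        intro t h0t hta
        by_contra h
        push_neg at h
        have : t ∈ Sa := Or.inl ⟨⟨h0t, hta.le.trans haL⟩, h⟩
        exact absurd (csInf_le hSabdd this) (not_le.2 hta)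
      have hφneg : ∀ t, a < t → t ≤ L → φ t < 0 := by
        intro t hat htL
        obtain ⟨s, hsSa, hst⟩ := exists_lt_of_csInf_lt hSane hat
        rcases hsSa with ⟨hs1, hs2⟩ | rfl
        · exact hup s t hs1.1 hst htL hs2
        · linarith
      have key : ∀ x ∈ Icc (0:ℝ) L, 0 ≤ u x ∧ u x ≤ u a := by
        intro x hx
        rcases le_total x a with hxa | hax
        · refine ⟨?_, ?_⟩
          · rw [← hu0]
            exact hpos 0 x le_rfl hx.1 hx.2
              (fun t ht => hφnonneg t ht.1.le (ht.2.trans_le hxa))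
          · exact hpos x a hx.1 hxa haL
              (fun t ht => hφnonneg t (hx.1.trans ht.1.le) ht.2)
        · refine ⟨?_, ?_⟩
          · rw [← huL]
            exact hneg x L hx.1 hx.2 le_rfl
              (fun t ht => (hφneg t (hax.trans_lt ht.1) ht.2.le).le)
          · exact hneg a x ha0 hax hx.2
              (fun t ht => (hφneg t ht.1 (ht.2.le.trans hx.2)).le)
      have hua : u a ≤ L / |b| := by
        rcases eq_or_lt_of_le ha0 with h0a | h0a
        · rw [← h0a, hu0]; positivity
        rcases eq_or_lt_of_le haL with haL' | haL'
        · rw [haL', huL]; positivity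
        · have hc0 : 0 ≤ c := by
            have := hφnonneg 0 le_rfl h0a
            simp only [hφdef, hu0, mul_zero] at this
            linarith
          have hφa : φ a ≤ 0 :=
            cont_nonpos_right hφcont ⟨ha0, haL⟩ haL' hφneg
          have habs : |b| = b := abs_of_pos hbpos
          rw [habs, le_div_iff₀ hbpos]
          simp only [hφdef] at hφa
          nlinarith
      intro x hx
      exact ⟨(key x hx).1, (key x hx).2.trans hua⟩
  exact hbound

/-- one-dimensional problem `−(Aᵉ(uᵉ)')' + b(uᵉ)' = 1` on `(0,L)` with
homogeneous Dirichlet conditions, `b ≠ 0` constant, `0 < α₁ ≤ Aᵉ ≤ α₂` a.e. Then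
`0 ≤ uᵉ(x) ≤ α₂ L/(α₁ |b|)` on `[0,L]` and `|uᵉ|²_{H¹} ≤ α₂ L²/(α₁² |b|)`. -/
theorem stmt2 (L : ℝ) (hL : 0 < L) (b : ℝ) (hb : b ≠ 0)
    (α₁ α₂ : ℝ) (hα₁ : 0 < α₁) (hα₁₂ : α₁ ≤ α₂)
    (A : ℝ → ℝ)
    (hA : ∀ᵐ x ∂(volume.restrict (Set.Ioo (0:ℝ) L)), α₁ ≤ A x ∧ A x ≤ α₂)
    (u u' : ℝ → ℝ)
    (hurep : ∀ x ∈ Set.Icc (0:ℝ) L, u x = ∫ t in (0:ℝ)..x, u' t)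
    (huL : u L = 0)
    (hu'2 : IntegrableOn (fun x => u' x ^ 2) (Set.Ioo (0:ℝ) L))
    (hweak : ∀ v v' : ℝ → ℝ,
      (∀ x ∈ Set.Icc (0:ℝ) L, v x = ∫ t in (0:ℝ)..x, v' t) → v L = 0 →
      IntegrableOn (fun x => v' x ^ 2) (Set.Ioo (0:ℝ) L) →
      (∫ x in Set.Ioo (0:ℝ) L, (A x * u' x * v' x + b * u' x * v x))
        = ∫ x in Set.Ioo (0:ℝ) L, v x) :
    (∀ x ∈ Set.Icc (0:ℝ) L, 0 ≤ u x ∧ u x ≤ α₂ * L / (α₁ * |b|)) ∧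
    (∫ x in Set.Ioo (0:ℝ) L, u' x ^ 2) ≤ α₂ * L ^ 2 / (α₁ ^ 2 * |b|) := by
  have hΩmeas : MeasurableSet (Set.Ioo (0:ℝ) L) := measurableSet_Ioo
  have hmem : ∀ᵐ x ∂(volume.restrict (Set.Ioo (0:ℝ) L)), x ∈ Set.Ioo (0:ℝ) L :=
    ae_restrict_mem hΩmeas
  -- test function 1 : v₁ = x(L-x)
  have hcv₁ : Continuous (fun x : ℝ => x * (L - x)) := continuous_id.mul (continuous_const.sub continuous_id)
  have hcv₁' : Continuous (fun x : ℝ => L - 2*x) := continuous_const.sub (continuous_const.mul continuous_id)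
  have hcv₂ : Continuous (fun x : ℝ => x^2 * (L - x)) := (continuous_pow 2).mul (continuous_const.sub continuous_id)
  have hcv₂' : Continuous (fun x : ℝ => 2*L*x - 3*x^2) := (continuous_const.mul continuous_id).sub (continuous_const.mul (continuous_pow 2))
  have hDv₁ : ∀ x : ℝ, HasDerivAt (fun x => x * (L - x)) (L - 2*x) x := by
    intro x
    have h := (hasDerivAt_id x).mul ((hasDerivAt_const x L).sub (hasDerivAt_id x))
    exact h.congr_deriv (by simp only [Pi.sub_apply, id_eq]; ring)
  have hDv₂ : ∀ x : ℝ, HasDerivAt (fun x => x^2 * (L - x)) (2*L*x - 3*x^2) x := by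
    intro x
    have h := (hasDerivAt_pow 2 x).mul ((hasDerivAt_const x L).sub (hasDerivAt_id x))
    exact h.congr_deriv (by simp only [Pi.sub_apply, id_eq]; push_cast; ring)
  have hv₁rep : ∀ x ∈ Set.Icc (0:ℝ) L, x * (L - x) = ∫ t in (0:ℝ)..x, (L - 2*t) := by
    intro x _
    rw [intervalIntegral.integral_eq_sub_of_hasDerivAt (fun t _ => hDv₁ t)
      (hcv₁'.intervalIntegrable _ _)]
    ring
  have hv₂rep : ∀ x ∈ Set.Icc (0:ℝ) L, x^2 * (L - x) = ∫ t in (0:ℝ)..x, (2*L*t - 3*t^2) := by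
    intro x _
    rw [intervalIntegral.integral_eq_sub_of_hasDerivAt (fun t _ => hDv₂ t)
      (hcv₂'.intervalIntegrable _ _)]
    ring
  have hv₁sq : IntegrableOn (fun x => (L - 2*x)^2) (Set.Ioo (0:ℝ) L) :=
    ((hcv₁'.pow 2).integrableOn_Icc).mono_set Set.Ioo_subset_Icc_self
  have hv₂sq : IntegrableOn (fun x => (2*L*x - 3*x^2)^2) (Set.Ioo (0:ℝ) L) :=
    ((hcv₂'.pow 2).integrableOn_Icc).mono_set Set.Ioo_subset_Icc_self
  -- values of ∫ v₁, ∫ v₂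
  have hioo_ioc : ∀ f : ℝ → ℝ, (∫ x in Set.Ioo (0:ℝ) L, f x) = ∫ x in (0:ℝ)..L, f x := by
    intro f
    rw [intervalIntegral.integral_of_le hL.le, Measure.restrict_congr_set Ioo_ae_eq_Ioc]
  have hint₁ : (∫ x in Set.Ioo (0:ℝ) L, x * (L - x)) = L^3/6 := by
    rw [hioo_ioc]
    have hF : ∀ x : ℝ, HasDerivAt (fun x => L*x^2/2 - x^3/3) (x*(L-x)) x := by
      intro x
      have h1 : HasDerivAt (fun x : ℝ => x^2) (2*x) x := by simpa using hasDerivAt_pow 2 x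
      have h2 : HasDerivAt (fun x : ℝ => x^3) (3*x^2) x := by simpa using hasDerivAt_pow 3 x
      have := ((h1.const_mul L).div_const 2).sub (h2.div_const 3)
      exact this.congr_deriv (by ring)
    rw [intervalIntegral.integral_eq_sub_of_hasDerivAt (fun t _ => hF t)
      (hcv₁.intervalIntegrable _ _)]
    ring
  have hint₂ : (∫ x in Set.Ioo (0:ℝ) L, x^2 * (L - x)) = L^4/12 := by
    rw [hioo_ioc]
    have hF : ∀ x : ℝ, HasDerivAt (fun x => L*x^3/3 - x^4/4) (x^2*(L-x)) x := by
      intro x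
      have h1 : HasDerivAt (fun x : ℝ => x^3) (3*x^2) x := by simpa using hasDerivAt_pow 3 x
      have h2 : HasDerivAt (fun x : ℝ => x^4) (4*x^3) x := by simpa using hasDerivAt_pow 4 x
      have := ((h1.const_mul L).div_const 3).sub (h2.div_const 4)
      exact this.congr_deriv (by ring)
    rw [intervalIntegral.integral_eq_sub_of_hasDerivAt (fun t _ => hF t)
      (hcv₂.intervalIntegrable _ _)]
    ring
  -- integrability of weak-form integrands for the two test functions
  have hf₁int : Integrable (fun x => A x * u' x * (L - 2*x) + b * u' x * (x * (L - x)))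
      (volume.restrict (Set.Ioo (0:ℝ) L)) := by
    by_contra h
    have hw := hweak (fun x => x * (L - x)) (fun x => L - 2*x) hv₁rep (by ring) hv₁sq
    rw [MeasureTheory.integral_undef h, hint₁] at hw
    have : (0:ℝ) < L^3/6 := by positivity
    linarith
  have hf₂int : Integrable (fun x => A x * u' x * (2*L*x - 3*x^2) + b * u' x * (x^2 * (L - x)))
      (volume.restrict (Set.Ioo (0:ℝ) L)) := by
    by_contra h
    have hw := hweak (fun x => x^2 * (L - x)) (fun x => 2*L*x - 3*x^2) hv₂rep (by ring) hv₂sq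
    rw [MeasureTheory.integral_undef h, hint₂] at hw
    have : (0:ℝ) < L^4/12 := by positivity
    linarith
  -- a.e. strong measurability of u'
  have hu'meas : AEStronglyMeasurable u' (volume.restrict (Set.Ioo (0:ℝ) L)) := by
    have hden : Continuous (fun x : ℝ => b * (x^2 * (L-x)^2)) :=
      continuous_const.mul ((continuous_pow 2).mul ((continuous_const.sub continuous_id).pow 2))
    have hnum : AEStronglyMeasurable (fun x =>
        (A x * u' x * (L - 2*x) + b * u' x * (x * (L - x))) * (2*L*x - 3*x^2)
          - (A x * u' x * (2*L*x - 3*x^2) + b * u' x * (x^2 * (L - x))) * (L - 2*x))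
        (volume.restrict (Set.Ioo (0:ℝ) L)) :=
      (hf₁int.aestronglyMeasurable.mul hcv₂'.aestronglyMeasurable).sub
        (hf₂int.aestronglyMeasurable.mul hcv₁'.aestronglyMeasurable)
    have hcand : AEStronglyMeasurable (fun x =>
        ((A x * u' x * (L - 2*x) + b * u' x * (x * (L - x))) * (2*L*x - 3*x^2)
          - (A x * u' x * (2*L*x - 3*x^2) + b * u' x * (x^2 * (L - x))) * (L - 2*x))
          / (b * (x^2 * (L-x)^2)))
        (volume.restrict (Set.Ioo (0:ℝ) L)) :=
      (hnum.aemeasurable.div hden.measurable.aemeasurable).aestronglyMeasurable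
    refine hcand.congr ?_
    filter_upwards [hmem] with x hx
    have hx0 : x ≠ 0 := ne_of_gt hx.1
    have hxL : (L - x) ≠ 0 := sub_ne_zero.2 (ne_of_gt hx.2)
    field_simp
    ring
  -- a.e. strong measurability of A * u'
  have hAu'meas : AEStronglyMeasurable (fun x => A x * u' x)
      (volume.restrict (Set.Ioo (0:ℝ) L)) := by
    have hne : ∀ᵐ x ∂(volume.restrict (Set.Ioo (0:ℝ) L)), x ≠ L/2 := by
      have h0 : volume.restrict (Set.Ioo (0:ℝ) L) ({L/2} : Set ℝ) = 0 :=
        le_antisymm (le_trans (Measure.restrict_le_self _) (le_of_eq (measure_singleton _))) zero_le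
      have := measure_eq_zero_iff_ae_notMem.1 h0
      filter_upwards [this] with x hx
      simpa using hx
    have hnum : AEStronglyMeasurable (fun x =>
        (A x * u' x * (L - 2*x) + b * u' x * (x * (L - x))) - b * u' x * (x * (L - x)))
        (volume.restrict (Set.Ioo (0:ℝ) L)) :=
      hf₁int.aestronglyMeasurable.sub
        ((aestronglyMeasurable_const.mul hu'meas).mul hcv₁.aestronglyMeasurable)
    have hcand : AEStronglyMeasurable (fun x =>
        ((A x * u' x * (L - 2*x) + b * u' x * (x * (L - x))) - b * u' x * (x * (L - x)))
          / (L - 2*x))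
        (volume.restrict (Set.Ioo (0:ℝ) L)) :=
      (hnum.aemeasurable.div hcv₁'.measurable.aemeasurable).aestronglyMeasurable
    refine hcand.congr ?_
    filter_upwards [hne] with x hx
    have h2 : L - 2*x ≠ 0 := by
      intro hcon
      apply hx
      linarith
    field_simp
    ring
  haveI hfin : IsFiniteMeasure (volume.restrict (Set.Ioo (0:ℝ) L)) :=
    ⟨by rw [Measure.restrict_apply_univ]; exact measure_Ioo_lt_top⟩
  -- u' is integrable
  have hu'int : IntegrableOn u' (Set.Ioo (0:ℝ) L) := by
    refine Integrable.mono' ((integrable_const (1:ℝ)).add hu'2) hu'meas ?_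
    refine Filter.Eventually.of_forall (fun x => ?_)
    simp only [Pi.add_apply]
    rw [Real.norm_eq_abs]
    nlinarith [sq_abs (u' x), sq_nonneg (|u' x| - 1)]
  -- u is continuous and bounded
  have hucont : ContinuousOn u (Set.Icc (0:ℝ) L) := by
    have hIcc : IntegrableOn u' (Set.Icc (0:ℝ) L) := by
      rw [IntegrableOn, ← Measure.restrict_congr_set Ioo_ae_eq_Icc]; exact hu'int
    apply (intervalIntegral.continuousOn_primitive (f := u') (a := 0) (b := L)
      (μ := volume) hIcc).congr
    intro x hx
    rw [hurep x hx, intervalIntegral.integral_of_le hx.1]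
  obtain ⟨Cu, hCu⟩ : ∃ C, ∀ x ∈ Set.Icc (0:ℝ) L, |u x| ≤ C := by
    obtain ⟨C, hC⟩ := (isCompact_Icc (a := (0:ℝ)) (b := L)).exists_bound_of_continuousOn hucont
    exact ⟨C, fun x hx => by simpa using hC x hx⟩
  have humeas : AEStronglyMeasurable u (volume.restrict (Set.Ioo (0:ℝ) L)) :=
    (hucont.mono Set.Ioo_subset_Icc_self).aestronglyMeasurable hΩmeas
  have huint : IntegrableOn u (Set.Ioo (0:ℝ) L) := by
    refine Integrable.mono' (integrable_const Cu) humeas ?_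
    filter_upwards [hmem] with x hx
    rw [Real.norm_eq_abs]; exact hCu x (Set.Ioo_subset_Icc_self hx)
  -- primitive identities
  have hudiffIoo : ∀ x ∈ Set.Icc (0:ℝ) L, u x = ∫ t in Set.Ioo 0 x, u' t := by
    intro x hx
    rw [hurep x hx, intervalIntegral.integral_of_le hx.1,
      ← Measure.restrict_congr_set Ioo_ae_eq_Ioc]
  have hIocint : IntegrableOn u' (Set.Ioc (0:ℝ) L) := by
    rw [IntegrableOn, ← Measure.restrict_congr_set Ioo_ae_eq_Ioc]; exact hu'int
  have hIoot : ∀ t ∈ Set.Ioo (0:ℝ) L, (∫ x in Set.Ioo t L, u' x) = - u t := by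
    intro t ht
    have h1 : IntervalIntegrable u' volume 0 L :=
      (intervalIntegrable_iff_integrableOn_Ioc_of_le hL.le).2 hIocint
    have h2 : IntervalIntegrable u' volume 0 t :=
      (intervalIntegrable_iff_integrableOn_Ioc_of_le ht.1.le).2
        (hIocint.mono_set (Set.Ioc_subset_Ioc le_rfl ht.2.le))
    have h3 : (∫ x in t..L, u' x) = u L - u t := by
      rw [hurep L (Set.right_mem_Icc.2 hL.le), hurep t ⟨ht.1.le, ht.2.le⟩]
      exact (intervalIntegral.integral_interval_sub_left h1 h2).symm
    have h4 : (∫ x in Set.Ioo t L, u' x) = ∫ x in t..L, u' x := by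
      rw [intervalIntegral.integral_of_le ht.2.le, Measure.restrict_congr_set Ioo_ae_eq_Ioc]
    rw [h4, h3, huL]; ring
  -- ∫ u' u = 0
  have hC : (∫ x in Set.Ioo (0:ℝ) L, u' x * u x) = 0 := by
    have hfub := fubini_helper (L := L) (f := u') (q := u') hu'int hu'int
    have hL1 : (∫ x in Set.Ioo (0:ℝ) L, u' x * ∫ t in Set.Ioo 0 x, u' t)
        = ∫ x in Set.Ioo (0:ℝ) L, u' x * u x :=
      setIntegral_congr_fun hΩmeas
        (fun x hx => by rw [← hudiffIoo x (Set.Ioo_subset_Icc_self hx)])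
    have hL2 : (∫ t in Set.Ioo (0:ℝ) L, u' t * ∫ x in Set.Ioo t L, u' x)
        = ∫ t in Set.Ioo (0:ℝ) L, -(u' t * u t) :=
      setIntegral_congr_fun hΩmeas (fun t ht => by rw [hIoot t ht]; ring)
    rw [hL1, hL2, integral_neg] at hfub
    linarith
  -- bound for A * u'
  have hα₂0 : (0:ℝ) < α₂ := lt_of_lt_of_le hα₁ hα₁₂
  have hAabs : ∀ᵐ x ∂(volume.restrict (Set.Ioo (0:ℝ) L)), |A x| ≤ α₂ := by
    filter_upwards [hA] with x hx
    rw [abs_of_pos (lt_of_lt_of_le hα₁ hx.1)]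
    exact hx.2
  -- the du Bois-Reymond orthogonality relation
  have keyB : ∀ w : ℝ → ℝ, AEStronglyMeasurable w (volume.restrict (Set.Ioo (0:ℝ) L)) →
      Integrable (fun x => w x ^ 2) (volume.restrict (Set.Ioo (0:ℝ) L)) →
      (∫ x in Set.Ioo (0:ℝ) L, w x) = 0 →
      (∫ x in Set.Ioo (0:ℝ) L, w x * (A x * u' x - b * u x - L + x)) = 0 := by
    intro w hwmeas hw2 hw0
    have hwint : Integrable w (volume.restrict (Set.Ioo (0:ℝ) L)) := by
      refine Integrable.mono' ((integrable_const (1:ℝ)).add hw2) hwmeas ?_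
      refine Filter.Eventually.of_forall (fun x => ?_)
      simp only [Pi.add_apply]
      rw [Real.norm_eq_abs]
      nlinarith [sq_abs (w x), sq_nonneg (|w x| - 1)]
    set v' : ℝ → ℝ := (Set.Ioo (0:ℝ) L).indicator w with hv'def
    have hv'int : Integrable v' volume :=
      MeasureTheory.IntegrableOn.integrable_indicator
        (show IntegrableOn w (Set.Ioo (0:ℝ) L) volume from hwint) hΩmeas
    set v : ℝ → ℝ := fun x => ∫ t in (0:ℝ)..x, v' t with hvdef
    have hvrep : ∀ x ∈ Set.Icc (0:ℝ) L, v x = ∫ t in (0:ℝ)..x, v' t := fun x _ => rfl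
    have hvL : v L = 0 := by
      rw [hvdef]
      simp only
      rw [intervalIntegral.integral_of_le hL.le, hv'def, setIntegral_indicator hΩmeas,
        Set.inter_eq_self_of_subset_right Set.Ioo_subset_Ioc_self]
      exact hw0
    have hv'sq : IntegrableOn (fun x => v' x ^ 2) (Set.Ioo (0:ℝ) L) :=
      MeasureTheory.IntegrableOn.congr_fun
        (show IntegrableOn (fun x => w x ^ 2) (Set.Ioo (0:ℝ) L) volume from hw2)
        (fun x hx => by rw [hv'def, Set.indicator_of_mem hx]) hΩmeas
    have hvcont : Continuous v := by
      rw [hvdef]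
      exact intervalIntegral.continuous_primitive (fun a b => hv'int.intervalIntegrable) 0
    obtain ⟨Cv, hCv⟩ : ∃ C, ∀ x ∈ Set.Icc (0:ℝ) L, |v x| ≤ C := by
      obtain ⟨C, hC⟩ := (isCompact_Icc (a := (0:ℝ)) (b := L)).exists_bound_of_continuousOn
        hvcont.continuousOn
      exact ⟨C, fun x hx => by simpa using hC x hx⟩
    have hwk := hweak v v' hvrep hvL hv'sq
    -- integrability of the pieces
    have hAu'w : Integrable (fun x => A x * u' x * w x)
        (volume.restrict (Set.Ioo (0:ℝ) L)) := by
      refine Integrable.mono' ((hu'2.add hw2).const_mul (α₂/2)) (hAu'meas.mul hwmeas) ?_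
      filter_upwards [hAabs] with x hx
      rw [Real.norm_eq_abs]
      have h1 : |A x * u' x * w x| = |A x| * (|u' x| * |w x|) := by
        rw [abs_mul, abs_mul, mul_assoc]
      have h2 : |u' x| * |w x| ≤ (u' x ^ 2 + w x ^ 2)/2 := by
        nlinarith [sq_nonneg (|u' x| - |w x|), sq_abs (u' x), sq_abs (w x)]
      have h3 : (0:ℝ) ≤ |u' x| * |w x| := mul_nonneg (abs_nonneg _) (abs_nonneg _)
      calc |A x * u' x * w x| = |A x| * (|u' x| * |w x|) := h1
        _ ≤ α₂ * ((u' x ^ 2 + w x ^ 2)/2) :=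
            mul_le_mul hx h2 h3 hα₂0.le
        _ = α₂/2 * ((fun x => u' x ^ 2) + fun x => w x ^ 2) x := by
            simp only [Pi.add_apply]; ring
    have hbu'v : Integrable (fun x => b * u' x * v x)
        (volume.restrict (Set.Ioo (0:ℝ) L)) := by
      refine Integrable.mono' ((hu'int.abs.const_mul (|b| * Cv)))
        ((aestronglyMeasurable_const.mul hu'meas).mul hvcont.aestronglyMeasurable) ?_
      filter_upwards [hmem] with x hx
      rw [Real.norm_eq_abs, abs_mul, abs_mul]
      have h1 := hCv x (Set.Ioo_subset_Icc_self hx)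
      calc |b| * |u' x| * |v x| ≤ |b| * |u' x| * Cv :=
            mul_le_mul_of_nonneg_left h1 (mul_nonneg (abs_nonneg b) (abs_nonneg (u' x)))
        _ = |b| * Cv * |u' x| := by ring
    -- split the weak formulation
    have hsplit : (∫ x in Set.Ioo (0:ℝ) L, (A x * u' x * v' x + b * u' x * v x))
        = (∫ x in Set.Ioo (0:ℝ) L, A x * u' x * w x)
          + ∫ x in Set.Ioo (0:ℝ) L, b * u' x * v x := by
      rw [setIntegral_congr_fun hΩmeas
        (g := fun x => A x * u' x * w x + b * u' x * v x)
        (fun x hx => by rw [hv'def, Set.indicator_of_mem hx])]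
      exact integral_add hAu'w hbu'v
    -- Fubini for ∫ u' v
    have hfub2 := fubini_helper (L := L) (f := v') (q := u') hv'int.integrableOn hu'int
    have hfub2L : (∫ x in Set.Ioo (0:ℝ) L, u' x * v x)
        = ∫ t in Set.Ioo (0:ℝ) L, v' t * ∫ x in Set.Ioo t L, u' x := by
      rw [← hfub2]
      apply setIntegral_congr_fun hΩmeas
      intro x hx
      congr 1
      rw [hvdef]
      simp only
      rw [intervalIntegral.integral_of_le hx.1.le,
        ← Measure.restrict_congr_set Ioo_ae_eq_Ioc]
    have hfub2R : (∫ t in Set.Ioo (0:ℝ) L, v' t * ∫ x in Set.Ioo t L, u' x)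
        = - ∫ t in Set.Ioo (0:ℝ) L, w t * u t := by
      rw [← integral_neg]
      apply setIntegral_congr_fun hΩmeas
      intro t ht
      show v' t * (∫ x in Set.Ioo t L, u' x) = -(w t * u t)
      rw [hIoot t ht, hv'def, Set.indicator_of_mem ht]
      ring
    -- Fubini for ∫ v
    have hfub1 := fubini_helper (L := L) (f := v') (q := fun _ => (1:ℝ))
      hv'int.integrableOn (integrableOn_const measure_Ioo_lt_top.ne)
    have hfub1L : (∫ x in Set.Ioo (0:ℝ) L, v x)
        = ∫ t in Set.Ioo (0:ℝ) L, w t * (L - t) := by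
      have e1 : (∫ x in Set.Ioo (0:ℝ) L, v x)
          = ∫ x in Set.Ioo (0:ℝ) L, (1:ℝ) * ∫ t in Set.Ioo 0 x, v' t := by
        apply setIntegral_congr_fun hΩmeas
        intro x hx
        show v x = (1:ℝ) * ∫ t in Set.Ioo 0 x, v' t
        rw [one_mul]
        simp only [hvdef]
        rw [intervalIntegral.integral_of_le hx.1.le,
          ← Measure.restrict_congr_set Ioo_ae_eq_Ioc]
      have hfub1' : (∫ x in Set.Ioo (0:ℝ) L, (1:ℝ) * ∫ t in Set.Ioo 0 x, v' t)
          = ∫ t in Set.Ioo (0:ℝ) L, v' t * ∫ x in Set.Ioo t L, (1:ℝ) := hfub1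
      have e2 : (∫ t in Set.Ioo (0:ℝ) L, v' t * ∫ x in Set.Ioo t L, (1:ℝ))
          = ∫ t in Set.Ioo (0:ℝ) L, w t * (L - t) := by
        apply setIntegral_congr_fun hΩmeas
        intro t ht
        show v' t * (∫ x in Set.Ioo t L, (1:ℝ)) = w t * (L - t)
        rw [hv'def, Set.indicator_of_mem ht, setIntegral_const, measureReal_def, Real.volume_Ioo,
          smul_eq_mul, mul_one, ENNReal.toReal_ofReal (by linarith [ht.2] : (0:ℝ) ≤ L - t)]
      rw [e1, hfub1', e2]
    -- integrability of w·u and w·(L-x)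
    have hwu : Integrable (fun x => w x * u x) (volume.restrict (Set.Ioo (0:ℝ) L)) := by
      refine Integrable.mono' (hwint.abs.const_mul Cu) (hwmeas.mul humeas) ?_
      filter_upwards [hmem] with x hx
      rw [Real.norm_eq_abs, abs_mul]
      have h1 := hCu x (Set.Ioo_subset_Icc_self hx)
      nlinarith [abs_nonneg (w x), abs_nonneg (u x)]
    have hwL : Integrable (fun x => w x * (L - x)) (volume.restrict (Set.Ioo (0:ℝ) L)) := by
      refine Integrable.mono' (hwint.abs.const_mul L)
        (hwmeas.mul (continuous_const.sub continuous_id).aestronglyMeasurable) ?_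
      filter_upwards [hmem] with x hx
      rw [Real.norm_eq_abs, abs_mul, abs_of_pos (by linarith [hx.2] : (0:ℝ) < L - x)]
      nlinarith [abs_nonneg (w x), hx.1, hx.2]
    -- pull out constants
    have hpull1 : (∫ x in Set.Ioo (0:ℝ) L, b * u' x * v x)
        = b * ∫ x in Set.Ioo (0:ℝ) L, u' x * v x := by
      simp only [mul_assoc]
      exact integral_const_mul b _
    -- final assembly
    have hexp : (fun x => w x * (A x * u' x - b * u x - L + x))
        = fun x => A x * u' x * w x - b * (w x * u x) - w x * (L - x) :=
      funext fun x => by ring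
    have hd1 : Integrable (fun x => A x * u' x * w x - b * (w x * u x))
        (volume.restrict (Set.Ioo (0:ℝ) L)) := hAu'w.sub (hwu.const_mul b)
    rw [hexp, integral_sub hd1 hwL, integral_sub hAu'w (hwu.const_mul b), integral_const_mul]
    have hwkEq : (∫ x in Set.Ioo (0:ℝ) L, A x * u' x * w x)
        + b * (- ∫ t in Set.Ioo (0:ℝ) L, w t * u t)
        = ∫ t in Set.Ioo (0:ℝ) L, w t * (L - t) := by
      rw [← hfub2R, ← hfub2L, ← hpull1, ← hsplit, hwk, hfub1L]
    linarith [hwkEq]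
  -- G and its integrability
  have habs : (0:ℝ) < |b| := abs_pos.2 hb
  obtain ⟨K, hKdef⟩ : ∃ K, K = |b| * Cu + 2*L := ⟨_, rfl⟩
  have hGmeas : AEStronglyMeasurable (fun x => A x * u' x - b * u x - L + x)
      (volume.restrict (Set.Ioo (0:ℝ) L)) :=
    ((hAu'meas.sub (aestronglyMeasurable_const.mul humeas)).sub
      aestronglyMeasurable_const).add continuous_id.aestronglyMeasurable
  have hGbound : ∀ᵐ x ∂(volume.restrict (Set.Ioo (0:ℝ) L)),
      |A x * u' x - b * u x - L + x| ≤ α₂ * |u' x| + K := by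
    filter_upwards [hAabs, hmem] with x hx hxm
    have h1 : |A x * u' x| ≤ α₂ * |u' x| := by
      rw [abs_mul]; exact mul_le_mul_of_nonneg_right hx (abs_nonneg _)
    have h2 : |u x| ≤ Cu := hCu x (Set.Ioo_subset_Icc_self hxm)
    have h3 : |b * u x| ≤ |b| * Cu := by
      rw [abs_mul]; exact mul_le_mul_of_nonneg_left h2 (abs_nonneg b)
    have h4 : |x| ≤ L := by rw [abs_of_pos hxm.1]; exact hxm.2.le
    obtain ⟨h1a, h1b⟩ := abs_le.1 h1
    obtain ⟨h3a, h3b⟩ := abs_le.1 h3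
    obtain ⟨h4a, h4b⟩ := abs_le.1 h4
    rw [abs_le]; constructor <;> [skip; skip] <;> nlinarith [hKdef]
  have hGint : Integrable (fun x => A x * u' x - b * u x - L + x)
      (volume.restrict (Set.Ioo (0:ℝ) L)) := by
    refine Integrable.mono' ((hu'int.abs.const_mul α₂).add (integrable_const K)) hGmeas ?_
    filter_upwards [hGbound] with x hx
    simp only [Pi.add_apply]
    rw [Real.norm_eq_abs]
    exact hx
  have hGpow : AEStronglyMeasurable (fun x => (A x * u' x - b * u x - L + x)^2)
      (volume.restrict (Set.Ioo (0:ℝ) L)) := hGmeas.pow 2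
  have hG2int : Integrable (fun x => (A x * u' x - b * u x - L + x)^2)
      (volume.restrict (Set.Ioo (0:ℝ) L)) := by
    refine Integrable.mono'
      ((hu'2.const_mul (α₂^2)).add ((hu'int.abs.const_mul (2*α₂*K)).add
        (integrable_const (K^2)))) hGpow ?_
    filter_upwards [hGbound] with x hx
    simp only [Pi.add_apply]
    rw [Real.norm_eq_abs, abs_pow]
    nlinarith [pow_le_pow_left₀ (abs_nonneg (A x * u' x - b * u x - L + x)) hx 2,
      sq_abs (u' x), sq_abs (A x * u' x - b * u x - L + x), abs_nonneg (u' x),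
      abs_nonneg (A x * u' x - b * u x - L + x)]
  -- the constant
  obtain ⟨c₀, hc₀⟩ : ∃ c₀,
      c₀ = (∫ x in Set.Ioo (0:ℝ) L, (A x * u' x - b * u x - L + x)) / L := ⟨_, rfl⟩
  have hwzero : (∫ x in Set.Ioo (0:ℝ) L, ((A x * u' x - b * u x - L + x) - c₀)) = 0 := by
    rw [integral_sub hGint (integrable_const c₀), setIntegral_const, measureReal_def, Real.volume_Ioo,
      sub_zero, ENNReal.toReal_ofReal hL.le, smul_eq_mul, hc₀]
    field_simp
    ring
  have hwmeas' : AEStronglyMeasurable (fun x => (A x * u' x - b * u x - L + x) - c₀)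
      (volume.restrict (Set.Ioo (0:ℝ) L)) := hGmeas.sub aestronglyMeasurable_const
  have hw2' : Integrable (fun x => ((A x * u' x - b * u x - L + x) - c₀)^2)
      (volume.restrict (Set.Ioo (0:ℝ) L)) := by
    refine Integrable.mono' ((hG2int.const_mul 2).add (integrable_const (2*c₀^2)))
      (hwmeas'.pow 2) ?_
    refine Filter.Eventually.of_forall (fun x => ?_)
    simp only [Pi.add_apply]
    rw [Real.norm_eq_abs, abs_pow, sq_abs]
    nlinarith [sq_nonneg ((A x * u' x - b * u x - L + x) + c₀)]
  have horth := keyB _ hwmeas' hw2' hwzero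
  have hprodint : Integrable
      (fun x => ((A x * u' x - b * u x - L + x) - c₀) * (A x * u' x - b * u x - L + x))
      (volume.restrict (Set.Ioo (0:ℝ) L)) := by
    refine Integrable.mono' ((hw2'.const_mul (1/2)).add (hG2int.const_mul (1/2)))
      (hwmeas'.mul hGmeas) ?_
    refine Filter.Eventually.of_forall (fun x => ?_)
    simp only [Pi.add_apply]
    rw [Real.norm_eq_abs]
    nlinarith [sq_nonneg ((A x * u' x - b * u x - L + x) - c₀ - (A x * u' x - b * u x - L + x)),
      sq_nonneg ((A x * u' x - b * u x - L + x) - c₀ + (A x * u' x - b * u x - L + x)),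
      abs_nonneg (((A x * u' x - b * u x - L + x) - c₀) * (A x * u' x - b * u x - L + x)),
      abs_mul_abs_self (((A x * u' x - b * u x - L + x) - c₀) * (A x * u' x - b * u x - L + x)),
      sq_abs (((A x * u' x - b * u x - L + x) - c₀) * (A x * u' x - b * u x - L + x))]
  have hsq0 : (∫ x in Set.Ioo (0:ℝ) L, ((A x * u' x - b * u x - L + x) - c₀)^2) = 0 := by
    have h1 : (fun x => ((A x * u' x - b * u x - L + x) - c₀)^2)
        = fun x => ((A x * u' x - b * u x - L + x) - c₀) * (A x * u' x - b * u x - L + x)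
          - c₀ * ((A x * u' x - b * u x - L + x) - c₀) :=
      funext fun x => by ring
    have h2 : Integrable (fun x => c₀ * ((A x * u' x - b * u x - L + x) - c₀))
        (volume.restrict (Set.Ioo (0:ℝ) L)) := (hGint.sub (integrable_const c₀)).const_mul c₀
    rw [h1, integral_sub hprodint h2, horth, integral_const_mul, hwzero]
    ring
  have hae0 := (integral_eq_zero_iff_of_nonneg_ae
    (Filter.Eventually.of_forall (fun x => sq_nonneg _)) hw2').1 hsq0
  have hident : ∀ᵐ x ∂(volume.restrict (Set.Ioo (0:ℝ) L)),
      A x * u' x = b * u x - x + (c₀ + L) := by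
    filter_upwards [hae0] with x hx
    simp only [Pi.zero_apply] at hx
    have h0 : (A x * u' x - b * u x - L + x) - c₀ = 0 :=
      pow_eq_zero_iff (by norm_num : (2:ℕ) ≠ 0) |>.1 hx
    linarith
  -- pointwise bounds via the maximum principle
  have hMP : ∀ x ∈ Set.Icc (0:ℝ) L, 0 ≤ u x ∧ u x ≤ L / |b| := by
    apply maxPrinciple hL hb hurep hu'int huL
    filter_upwards [hident, hA] with x h1 h2
    exact ⟨lt_of_lt_of_le hα₁ h2.1, h1⟩
  -- energy estimate
  have hwku := hweak u u' hurep huL hu'2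
  have hAu'u' : Integrable (fun x => A x * u' x * u' x)
      (volume.restrict (Set.Ioo (0:ℝ) L)) := by
    refine Integrable.mono' (hu'2.const_mul α₂) (hAu'meas.mul hu'meas) ?_
    filter_upwards [hAabs] with x hx
    rw [Real.norm_eq_abs, abs_mul, abs_mul]
    nlinarith [abs_nonneg (u' x), abs_nonneg (A x), sq_abs (u' x),
      mul_le_mul_of_nonneg_right (mul_le_mul_of_nonneg_right hx (abs_nonneg (u' x)))
        (abs_nonneg (u' x))]
  have hbu'u : Integrable (fun x => b * u' x * u x)
      (volume.restrict (Set.Ioo (0:ℝ) L)) := by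
    refine Integrable.mono' ((hu'int.abs.const_mul (|b| * Cu)))
      ((aestronglyMeasurable_const.mul hu'meas).mul humeas) ?_
    filter_upwards [hmem] with x hx
    rw [Real.norm_eq_abs, abs_mul, abs_mul]
    have h1 := hCu x (Set.Ioo_subset_Icc_self hx)
    calc |b| * |u' x| * |u x| ≤ |b| * |u' x| * Cu :=
          mul_le_mul_of_nonneg_left h1 (mul_nonneg (abs_nonneg b) (abs_nonneg (u' x)))
      _ = |b| * Cu * |u' x| := by ring
  have hsplit2 : (∫ x in Set.Ioo (0:ℝ) L, (A x * u' x * u' x + b * u' x * u x))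
      = (∫ x in Set.Ioo (0:ℝ) L, A x * u' x * u' x)
        + ∫ x in Set.Ioo (0:ℝ) L, b * u' x * u x := integral_add hAu'u' hbu'u
  have hpull2 : (∫ x in Set.Ioo (0:ℝ) L, b * u' x * u x)
      = b * ∫ x in Set.Ioo (0:ℝ) L, u' x * u x := by
    simp only [mul_assoc]
    exact integral_const_mul b _
  have hEnergy : (∫ x in Set.Ioo (0:ℝ) L, A x * u' x * u' x)
      = ∫ x in Set.Ioo (0:ℝ) L, u x := by
    rw [hpull2, hC, mul_zero, add_zero] at hsplit2
    rw [← hsplit2, hwku]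
  have hlow : α₁ * (∫ x in Set.Ioo (0:ℝ) L, u' x ^ 2)
      ≤ ∫ x in Set.Ioo (0:ℝ) L, A x * u' x * u' x := by
    rw [← integral_const_mul]
    apply integral_mono_ae (hu'2.const_mul α₁) hAu'u'
    filter_upwards [hA] with x hx
    nlinarith [sq_nonneg (u' x), mul_nonneg (sub_nonneg.2 hx.1) (sq_nonneg (u' x))]
  have hupper : (∫ x in Set.Ioo (0:ℝ) L, u x) ≤ L * (L / |b|) := by
    have h1 : (∫ x in Set.Ioo (0:ℝ) L, u x) ≤ ∫ _x in Set.Ioo (0:ℝ) L, (L/|b|) :=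
      setIntegral_mono_on huint (integrable_const _) hΩmeas
        (fun x hx => (hMP x (Set.Ioo_subset_Icc_self hx)).2)
    have h2 : (∫ _x in Set.Ioo (0:ℝ) L, (L/|b|)) = L * (L/|b|) := by
      rw [setIntegral_const, measureReal_def, Real.volume_Ioo, sub_zero, ENNReal.toReal_ofReal hL.le,
        smul_eq_mul]
    linarith
  constructor
  · intro x hx
    refine ⟨(hMP x hx).1, le_trans (hMP x hx).2 ?_⟩
    rw [div_le_div_iff₀ habs (by positivity)]
    nlinarith [mul_nonneg (mul_nonneg (sub_nonneg.2 hα₁₂) hL.le) habs.le]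
  · have hkey : α₁ * (∫ x in Set.Ioo (0:ℝ) L, u' x ^ 2) ≤ L * (L/|b|) := by
      linarith [hlow, hupper, hEnergy]
    have h5 : (α₁*|b|) * (α₁ * ∫ x in Set.Ioo (0:ℝ) L, u' x ^ 2)
        ≤ (α₁*|b|) * (L * (L/|b|)) := mul_le_mul_of_nonneg_left hkey (by positivity)
    have h6 : (α₁*|b|) * (L * (L/|b|)) = α₁ * L^2 := by
      field_simp
    rw [le_div_iff₀ (by positivity : (0:ℝ) < α₁^2 * |b|)]
    nlinarith [h5, h6, mul_nonneg (mul_nonneg (sub_nonneg.2 hα₁₂) hL.le) hL.le]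
end

section
/- In the one-dimensional single-scale problem −αu'' + bu' = f on (0,1) with u(0) = u(1) = 0 and constant b ≠ 0, the MsFEM basis functions built from the full advection-diffusion operator (i.e., solving −αφ'' + bφ' = 0 on each element with affine boundary data) yield a Galerkin stiffness matrix that is tridiagonal with diagonal entries |b|coth(|b|H/(2α)) and off-diagonal entries −b exp(bH/α)/(exp(bH/α)−1) (sub-diagonal) and −b/(exp(bH/α)−1) (super-diagonal). -/
open MeasureTheory Real

open Set

set_option maxHeartbeats 1000000


/-- A function with zero derivative on an open interval is constant there. -/
lemma const_on_Ioo' {f : ℝ → ℝ} {p q : ℝ}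
    (hd : ∀ x ∈ Ioo p q, HasDerivAt f 0 x) :
    ∀ x ∈ Ioo p q, ∀ y ∈ Ioo p q, f x = f y := by
  have key : ∀ x ∈ Ioo p q, ∀ y ∈ Ioo p q, x ≤ y → f y = f x := by
    intro x hx y hy hxy
    have hsub : Icc x y ⊆ Ioo p q := fun t ht => ⟨lt_of_lt_of_le hx.1 ht.1, lt_of_le_of_lt ht.2 hy.2⟩
    have hcont : ContinuousOn f (Icc x y) := fun t ht =>
      ((hd t (hsub ht)).continuousAt).continuousWithinAt
    have := constant_of_has_deriv_right_zero hcont (fun t ht =>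
      (hd t (hsub ⟨ht.1, ht.2.le⟩)).hasDerivWithinAt)
    exact this y ⟨hxy, le_refl y⟩
  intro x hx y hy
  rcases le_total x y with h | h
  · exact (key x hx y hy h).symm
  · exact key y hy x hx h

/-- Zero derivative outside a closed set on which the function vanishes. -/
lemma deriv_zero_outside {f : ℝ → ℝ} {s : Set ℝ} (hs : IsClosed s)
    (h0 : ∀ x ∉ s, f x = 0) : ∀ x ∉ s, deriv f x = 0 := by
  intro x hx
  have h : f =ᶠ[nhds x] (fun _ => (0:ℝ)) := by
    filter_upwards [hs.isOpen_compl.mem_nhds hx] with y hy using h0 y hy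
  rw [h.deriv_eq]
  simp

/-- Explicit solution of `α f'' = b f'` on an open interval, in terms of boundary values. -/
lemma ode_solution (α b : ℝ) (hα : 0 < α) (hb : b ≠ 0) (f : ℝ → ℝ) (p q vp vq : ℝ)
    (hpq : p < q) (hfc : Continuous f)
    (hd : ∀ x ∈ Ioo p q, DifferentiableAt ℝ f x ∧ DifferentiableAt ℝ (deriv f) x)
    (hode : ∀ x ∈ Ioo p q, α * deriv (deriv f) x = b * deriv f x)
    (hvp : f p = vp) (hvq : f q = vq) :
    ∀ x ∈ Ioo p q,
      f x = vp + (vq - vp) * (exp (b/α*x) - exp (b/α*p)) / (exp (b/α*q) - exp (b/α*p)) ∧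
      deriv f x = (vq - vp) * (b/α) / (exp (b/α*q) - exp (b/α*p)) * exp (b/α*x) := by
  set β := b / α with hβdef
  have hβ : β ≠ 0 := div_ne_zero hb hα.ne'
  have hden : exp (β*q) - exp (β*p) ≠ 0 := by
    have : β * q ≠ β * p := fun h => hpq.ne' (mul_left_cancel₀ hβ h)
    exact sub_ne_zero.mpr (fun h => this (Real.exp_injective h))
  -- step 1: g = f' e^{-βx} is constant on Ioo
  set g : ℝ → ℝ := fun x => deriv f x * exp (-β * x) with hg
  have hgderiv : ∀ x ∈ Ioo p q, HasDerivAt g 0 x := by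
    intro x hx
    have h1 : HasDerivAt (deriv f) (deriv (deriv f) x) x := (hd x hx).2.hasDerivAt
    have h2 : HasDerivAt (fun y => exp (-β * y)) (exp (-β * x) * (-β)) x := by
      simpa using (HasDerivAt.exp ((hasDerivAt_id x).const_mul (-β)))
    have := h1.mul h2
    have hodex : deriv (deriv f) x = β * deriv f x := by
      have := hode x hx
      rw [hβdef, div_mul_eq_mul_div, eq_div_iff hα.ne']
      linear_combination this
    exact this.congr_deriv (by rw [hodex]; ring)
  have x0mem : (p+q)/2 ∈ Ioo p q := ⟨by linarith, by linarith⟩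
  set K := g ((p+q)/2) with hK
  have hgconst : ∀ x ∈ Ioo p q, g x = K := fun x hx =>
    const_on_Ioo' hgderiv x hx _ x0mem
  have hf' : ∀ x ∈ Ioo p q, deriv f x = K * exp (β * x) := by
    intro x hx
    have := hgconst x hx
    simp only [hg] at this
    have h2 : deriv f x * exp (-β*x) * exp (β*x) = K * exp (β*x) := by rw [this]
    rw [mul_assoc, ← Real.exp_add] at h2
    simpa using h2
  -- step 2: F = f - (K/β) e^{βx} is constant
  set A := K / β with hA0
  have hKA : K = A * β := (div_mul_cancel₀ K hβ).symm
  set F : ℝ → ℝ := fun x => f x - A * exp (β * x) with hF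
  have hFc : Continuous F := hfc.sub
    (continuous_const.mul (Real.continuous_exp.comp (continuous_const.mul continuous_id)))
  have hFderiv : ∀ x ∈ Ioo p q, HasDerivAt F 0 x := by
    intro x hx
    have h1 : HasDerivAt f (deriv f x) x := (hd x hx).1.hasDerivAt
    have h2 : HasDerivAt (fun y => A * exp (β * y)) (A * (exp (β*x) * β)) x := by
      simpa using (((hasDerivAt_id x).const_mul β).exp.const_mul A)
    have h3 := h1.sub h2
    exact h3.congr_deriv (by rw [hf' x hx, hKA]; ring)
  set c := F ((p+q)/2) with hc
  have hclos : EqOn F (fun _ => c) (Icc p q) := by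
    have h1 : EqOn F (fun _ => c) (Ioo p q) := fun x hx => const_on_Ioo' hFderiv x hx _ x0mem
    have := h1.closure hFc continuous_const
    rwa [closure_Ioo hpq.ne] at this
  have hFp : F p = c := hclos ⟨le_refl p, hpq.le⟩
  have hFq : F q = c := hclos ⟨hpq.le, le_refl q⟩
  have hpq' : vp - A * exp (β*p) = vq - A * exp (β*q) := by
    have h := hFp.trans hFq.symm
    simp only [hF] at h
    rw [hvp, hvq] at h
    exact h
  have hA : A = (vq - vp) / (exp (β*q) - exp (β*p)) := by
    rw [eq_div_iff hden]
    linear_combination hpq'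
  have hfx : ∀ x ∈ Ioo p q, f x = vp + A * (exp (β*x) - exp (β*p)) := by
    intro x hx
    have h1 : F x = c := const_on_Ioo' hFderiv x hx _ x0mem
    have h2 := h1.trans hFp.symm
    simp only [hF] at h2
    rw [hvp] at h2
    linarith
  intro x hx
  refine ⟨?_, ?_⟩
  · rw [hfx x hx, hA]; ring
  · rw [hf' x hx, hKA, hA]; ring

lemma integral_exp_combo (β c₁ c₂ p m : ℝ) (hβ : β ≠ 0) (hpm : p ≤ m) :
    ∫ x in Ioo p m, (c₁ * exp (β*x) * exp (β*x) + c₂ * exp (β*x)) =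
    c₁/(2*β) * (exp (β*m)*exp (β*m) - exp (β*p)*exp (β*p))
      + c₂/β * (exp (β*m) - exp (β*p)) := by
  have h1 : ∫ x in Ioo p m, (c₁ * exp (β*x) * exp (β*x) + c₂ * exp (β*x))
      = ∫ x in p..m, (c₁ * exp (β*x) * exp (β*x) + c₂ * exp (β*x)) := by
    rw [intervalIntegral.integral_of_le hpm, integral_Ioc_eq_integral_Ioo]
  rw [h1]
  have hF : ∀ x, HasDerivAt (fun y => c₁/(2*β) * (exp (β*y)*exp (β*y)) + c₂/β * exp (β*y))
      (c₁ * exp (β*x) * exp (β*x) + c₂ * exp (β*x)) x := by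
    intro x
    have he : HasDerivAt (fun y => exp (β*y)) (exp (β*x) * β) x := by
      simpa using ((hasDerivAt_id x).const_mul β).exp
    have h := ((he.mul he).const_mul (c₁/(2*β))).add (he.const_mul (c₂/β))
    exact h.congr_deriv (by field_simp; ring)
  have hint : IntervalIntegrable (fun x => c₁ * exp (β*x) * exp (β*x) + c₂ * exp (β*x))
      volume p m := by
    apply Continuous.intervalIntegrable
    continuity
  rw [intervalIntegral.integral_eq_sub_of_hasDerivAt (fun x _ => hF x) hint]
  ring

lemma integral_reduce {G : ℝ → ℝ} {S : Set ℝ} (hS : MeasurableSet S) (hS1 : S ⊆ Ioo (0:ℝ) 1)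
    (hzero : ∀ᵐ x ∂(volume.restrict (Ioo (0:ℝ) 1)), x ∉ S → G x = 0) :
    ∫ x in Ioo (0:ℝ) 1, G x = ∫ x in S, G x := by
  have h1 : ∫ x in Ioo (0:ℝ) 1, G x = ∫ x in Ioo (0:ℝ) 1, S.indicator G x := by
    apply integral_congr_ae
    filter_upwards [hzero] with x hx
    by_cases hxS : x ∈ S
    · rw [Set.indicator_of_mem hxS]
    · rw [Set.indicator_of_notMem hxS, hx hxS]
  rw [h1, integral_indicator hS, Measure.restrict_restrict hS,
    Set.inter_eq_self_of_subset_left hS1]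

lemma integral_Ioo_union {G : ℝ → ℝ} {p m q : ℝ}
    (h1 : IntegrableOn G (Ioo p m)) (h2 : IntegrableOn G (Ioo m q)) :
    ∫ x in Ioo p m ∪ Ioo m q, G x = (∫ x in Ioo p m, G x) + ∫ x in Ioo m q, G x := by
  apply setIntegral_union _ measurableSet_Ioo h1 h2
  rw [Set.disjoint_left]
  rintro x ⟨_, h⟩ ⟨h', _⟩
  exact absurd h (not_lt.2 h'.le)

lemma coth_to_exp (α b H : ℝ) (hα : 0 < α) (hb : b ≠ 0) (hH : 0 < H) :
    |b| * (Real.cosh (|b| * H/(2*α)) / Real.sinh (|b| * H/(2*α))) =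
    b * (Real.exp (b*H/α) + 1) / (Real.exp (b*H/α) - 1) := by
  have hb0 : 0 < |b| := abs_pos.2 hb
  have ht0 : 0 < |b| * H / (2*α) := by positivity
  obtain ⟨e, he⟩ : ∃ e, Real.exp (|b| * H / (2*α)) = e := ⟨_, rfl⟩
  have he1 : 1 < e := by
    rw [← he, ← Real.exp_zero]
    exact Real.exp_lt_exp.2 ht0
  have h0 : e ≠ 0 := by linarith
  have h2 : e * e - 1 ≠ 0 := by nlinarith
  have hip : 0 < e⁻¹ := by positivity
  have hlt1 : e⁻¹ < 1 := by rw [inv_lt_one_iff₀]; right; exact he1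
  have hsub : e - e⁻¹ ≠ 0 := by nlinarith
  have h5 : e⁻¹ * e⁻¹ - 1 ≠ 0 := by nlinarith
  have hcs : Real.cosh (|b| * H/(2*α)) / Real.sinh (|b| * H/(2*α)) = (e*e+1)/(e*e-1) := by
    rw [Real.cosh_eq, Real.sinh_eq, Real.exp_neg, he]
    rw [div_div_div_eq, div_eq_div_iff (mul_ne_zero two_ne_zero hsub) h2]
    field_simp
  rw [hcs]
  rcases lt_or_gt_of_ne hb with hbneg | hbpos
  · have habs : |b| = -b := abs_of_neg hbneg
    have hE : Real.exp (b*H/α) = e⁻¹ * e⁻¹ := by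
      rw [← he, ← Real.exp_neg, ← Real.exp_add]
      congr 1
      rw [habs]; ring
    rw [hE, habs, ← mul_div_assoc, div_eq_div_iff h2 h5]
    field_simp
    ring
  · have habs : |b| = b := abs_of_pos hbpos
    have hE : Real.exp (b*H/α) = e * e := by
      rw [← he, ← Real.exp_add]
      congr 1
      rw [habs]; ring
    rw [hE, habs]
    ring

lemma block_integral (β αv b K1 K2 A B p m : ℝ) (hβ : β ≠ 0) (hpm : p ≤ m)
    (f g : ℝ → ℝ)
    (hg' : ∀ x ∈ Ioo p m, deriv g x = K1 * exp (β*x))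
    (hf' : ∀ x ∈ Ioo p m, deriv f x = K2 * exp (β*x))
    (hf : ∀ x ∈ Ioo p m, f x = A + B * exp (β*x)) :
    ∫ x in Ioo p m, (αv * deriv g x * deriv f x + b * deriv g x * f x)
      = (αv*K1*K2 + b*K1*B)/(2*β) * (exp (β*m)*exp (β*m) - exp (β*p)*exp (β*p))
        + (b*K1*A)/β * (exp (β*m) - exp (β*p)) := by
  have h1 : ∫ x in Ioo p m, (αv * deriv g x * deriv f x + b * deriv g x * f x)
      = ∫ x in Ioo p m, ((αv*K1*K2 + b*K1*B) * exp (β*x) * exp (β*x) + (b*K1*A) * exp (β*x)) :=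
    setIntegral_congr_fun measurableSet_Ioo (fun x hx => by
      rw [hg' x hx, hf' x hx, hf x hx]; ring)
  rw [h1, integral_exp_combo β _ _ p m hβ hpm]

lemma block_integrable (β αv b K1 K2 A B p m : ℝ) (hpm : p ≤ m)
    (f g : ℝ → ℝ)
    (hg' : ∀ x ∈ Ioo p m, deriv g x = K1 * exp (β*x))
    (hf' : ∀ x ∈ Ioo p m, deriv f x = K2 * exp (β*x))
    (hf : ∀ x ∈ Ioo p m, f x = A + B * exp (β*x)) :
    IntegrableOn (fun x => αv * deriv g x * deriv f x + b * deriv g x * f x) (Ioo p m) := by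
  have h2 : IntegrableOn
      (fun x => (αv*K1*K2 + b*K1*B) * exp (β*x) * exp (β*x) + (b*K1*A) * exp (β*x))
      (Ioo p m) := by
    rw [← intervalIntegrable_iff_integrableOn_Ioo_of_le hpm]
    apply Continuous.intervalIntegrable
    continuity
  exact h2.congr_fun (fun x hx => by
    rw [hg' x hx, hf' x hx, hf x hx]; ring) measurableSet_Ioo

/-- in the one-dimensional single-scale problem `−αu'' + bu' = f` on
`(0,1)` (uniform mesh of size `H = 1/N`), the Adv-MsFEM basis functions `φᵢ`
(`1 ≤ i ≤ N−1`), which are continuous hat-like functions solving `−αφ'' + bφ' = 0` in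
each supporting element and matching the `P¹` nodal values, produce a tridiagonal
Galerkin stiffness matrix `M i j = ∫₀¹ αφⱼ'φᵢ' + bφⱼ'φᵢ` with diagonal entries
`|b| coth(|b|H/(2α))`, sub-diagonal entries `−b e^{bH/α}/(e^{bH/α}−1)` and
super-diagonal entries `−b/(e^{bH/α}−1)`. -/
theorem stmt17 (α b : ℝ) (hα : 0 < α) (hb : b ≠ 0)
    (N : ℕ) (hN : 2 ≤ N) (H : ℝ) (hH : H = 1 / N)
    (φ : ℕ → ℝ → ℝ)
    (hcont : ∀ i : ℕ, 1 ≤ i → i ≤ N - 1 → Continuous (φ i))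
    (hnode : ∀ i : ℕ, 1 ≤ i → i ≤ N - 1 → ∀ j : ℕ, j ≤ N →
      φ i ((j : ℝ) * H) = if i = j then 1 else 0)
    (hsupp : ∀ i : ℕ, 1 ≤ i → i ≤ N - 1 → ∀ x : ℝ,
      x ∉ Set.Icc (((i : ℝ) - 1) * H) (((i : ℝ) + 1) * H) → φ i x = 0)
    (hdiff : ∀ i : ℕ, 1 ≤ i → i ≤ N - 1 →
      ∀ x ∈ Set.Ioo (((i : ℝ) - 1) * H) ((i : ℝ) * H) ∪
          Set.Ioo ((i : ℝ) * H) (((i : ℝ) + 1) * H),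
        DifferentiableAt ℝ (φ i) x ∧ DifferentiableAt ℝ (deriv (φ i)) x)
    (hode : ∀ i : ℕ, 1 ≤ i → i ≤ N - 1 →
      ∀ x ∈ Set.Ioo (((i : ℝ) - 1) * H) ((i : ℝ) * H) ∪
          Set.Ioo ((i : ℝ) * H) (((i : ℝ) + 1) * H),
        α * deriv (deriv (φ i)) x = b * deriv (φ i) x) :
    (∀ i : ℕ, 1 ≤ i → i ≤ N - 1 →
      (∫ x in Set.Ioo (0:ℝ) 1, (α * deriv (φ i) x * deriv (φ i) x
          + b * deriv (φ i) x * φ i x))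
        = |b| * (Real.cosh (|b| * H / (2 * α)) / Real.sinh (|b| * H / (2 * α)))) ∧
    (∀ i : ℕ, 2 ≤ i → i ≤ N - 1 →
      (∫ x in Set.Ioo (0:ℝ) 1, (α * deriv (φ (i - 1)) x * deriv (φ i) x
          + b * deriv (φ (i - 1)) x * φ i x))
        = -b * Real.exp (b * H / α) / (Real.exp (b * H / α) - 1)) ∧
    (∀ i : ℕ, 1 ≤ i → i + 1 ≤ N - 1 →
      (∫ x in Set.Ioo (0:ℝ) 1, (α * deriv (φ (i + 1)) x * deriv (φ i) x
          + b * deriv (φ (i + 1)) x * φ i x))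
        = -b / (Real.exp (b * H / α) - 1)) ∧
    (∀ i j : ℕ, 1 ≤ i → i ≤ N - 1 → 1 ≤ j → j ≤ N - 1 → (i + 1 < j ∨ j + 1 < i) →
      (∫ x in Set.Ioo (0:ℝ) 1, (α * deriv (φ j) x * deriv (φ i) x
          + b * deriv (φ j) x * φ i x)) = 0) := by
  have hN0 : (0:ℝ) < N := by exact_mod_cast (by omega : 0 < N)
  have hH0 : 0 < H := by rw [hH]; positivity
  have hNH : (N:ℝ) * H = 1 := by rw [hH]; field_simp
  have hβ : b/α ≠ 0 := div_ne_zero hb hα.ne'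
  have hE1 : Real.exp (b*H/α) - 1 ≠ 0 := sub_ne_zero.mpr (by
    rw [Ne, Real.exp_eq_one_iff]
    exact div_ne_zero (mul_ne_zero hb hH0.ne') hα.ne')
  have hstep : ∀ r s : ℝ, r < s → r*H < s*H := fun r s h => mul_lt_mul_of_pos_right h hH0
  have node : ∀ i : ℕ, 1 ≤ i → i ≤ N - 1 →
      φ i (((i:ℝ)-1)*H) = 0 ∧ φ i ((i:ℝ)*H) = 1 ∧ φ i (((i:ℝ)+1)*H) = 0 := by
    intro i hi1 hi2
    have h1 := hnode i hi1 hi2 (i-1) (by omega)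
    have h2 := hnode i hi1 hi2 i (by omega)
    have h3 := hnode i hi1 hi2 (i+1) (by omega)
    rw [if_neg (by omega), Nat.cast_sub hi1, Nat.cast_one] at h1
    rw [if_pos rfl] at h2
    rw [if_neg (by omega), Nat.cast_add, Nat.cast_one] at h3
    exact ⟨h1, h2, h3⟩
  have solL : ∀ i : ℕ, 1 ≤ i → i ≤ N - 1 → ∀ x ∈ Ioo (((i:ℝ)-1)*H) ((i:ℝ)*H),
      φ i x = 0 + (1 - 0) * (exp (b/α*x) - exp (b/α*(((i:ℝ)-1)*H)))
          / (exp (b/α*((i:ℝ)*H)) - exp (b/α*(((i:ℝ)-1)*H)))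
      ∧ deriv (φ i) x = (1 - 0) * (b/α)
          / (exp (b/α*((i:ℝ)*H)) - exp (b/α*(((i:ℝ)-1)*H))) * exp (b/α*x) := by
    intro i hi1 hi2
    exact ode_solution α b hα hb (φ i) _ _ 0 1 (hstep _ _ (by linarith)) (hcont i hi1 hi2)
      (fun x hx => hdiff i hi1 hi2 x (Or.inl hx)) (fun x hx => hode i hi1 hi2 x (Or.inl hx))
      (node i hi1 hi2).1 (node i hi1 hi2).2.1
  have solR : ∀ i : ℕ, 1 ≤ i → i ≤ N - 1 → ∀ x ∈ Ioo ((i:ℝ)*H) (((i:ℝ)+1)*H),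
      φ i x = 1 + (0 - 1) * (exp (b/α*x) - exp (b/α*((i:ℝ)*H)))
          / (exp (b/α*(((i:ℝ)+1)*H)) - exp (b/α*((i:ℝ)*H)))
      ∧ deriv (φ i) x = (0 - 1) * (b/α)
          / (exp (b/α*(((i:ℝ)+1)*H)) - exp (b/α*((i:ℝ)*H))) * exp (b/α*x) := by
    intro i hi1 hi2
    exact ode_solution α b hα hb (φ i) _ _ 1 0 (hstep _ _ (by linarith)) (hcont i hi1 hi2)
      (fun x hx => hdiff i hi1 hi2 x (Or.inr hx)) (fun x hx => hode i hi1 hi2 x (Or.inr hx))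
      (node i hi1 hi2).2.1 (node i hi1 hi2).2.2
  have hz : ∀ i : ℕ, 1 ≤ i → i ≤ N - 1 → ∀ x ∉ Icc (((i:ℝ)-1)*H) (((i:ℝ)+1)*H),
      φ i x = 0 ∧ deriv (φ i) x = 0 := by
    intro i hi1 hi2 x hx
    exact ⟨hsupp i hi1 hi2 x hx, deriv_zero_outside isClosed_Icc (hsupp i hi1 hi2) x hx⟩
  refine ⟨?_, ?_, ?_, ?_⟩
  · -- diagonal
    intro i hi1 hi2
    have hi1' : (1:ℝ) ≤ (i:ℝ) := by exact_mod_cast hi1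
    have hiN' : (i:ℝ)+1 ≤ (N:ℝ) := by exact_mod_cast (by omega : i+1 ≤ N)
    set p := ((i:ℝ)-1)*H with hp
    set m := (i:ℝ)*H with hm
    set q := ((i:ℝ)+1)*H with hq
    have hpm : p < m := hstep _ _ (by linarith)
    have hmq : m < q := hstep _ _ (by linarith)
    have hp0 : 0 ≤ p := mul_nonneg (by linarith) hH0.le
    have hq1 : q ≤ 1 := by rw [← hNH, hq]; exact mul_le_mul_of_nonneg_right hiN' hH0.le
    have hu0 : exp (b/α*p) ≠ 0 := (Real.exp_pos _).ne'
    have hE0 : exp (b*H/α) ≠ 0 := (Real.exp_pos _).ne'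
    have hveq : exp (b/α*m) = exp (b/α*p) * exp (b*H/α) := by
      rw [← Real.exp_add]; congr 1; rw [hm, hp]; ring
    have hweq : exp (b/α*q) = exp (b/α*p) * exp (b*H/α) * exp (b*H/α) := by
      rw [← Real.exp_add, ← Real.exp_add]; congr 1; rw [hq, hp]; ring
    have hvu : exp (b/α*m) - exp (b/α*p) ≠ 0 := by
      rw [hveq, show exp (b/α*p) * exp (b*H/α) - exp (b/α*p)
        = exp (b/α*p) * (exp (b*H/α) - 1) by ring]
      exact mul_ne_zero hu0 hE1
    have hwv : exp (b/α*q) - exp (b/α*m) ≠ 0 := by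
      rw [hweq, hveq, show exp (b/α*p) * exp (b*H/α) * exp (b*H/α) - exp (b/α*p) * exp (b*H/α)
        = exp (b/α*p) * exp (b*H/α) * (exp (b*H/α) - 1) by ring]
      exact mul_ne_zero (mul_ne_zero hu0 hE0) hE1
    have hg'L : ∀ x ∈ Ioo p m, deriv (φ i) x
        = (1 - 0) * (b/α) / (exp (b/α*m) - exp (b/α*p)) * exp (b/α*x) :=
      fun x hx => (solL i hi1 hi2 x hx).2
    have hfL : ∀ x ∈ Ioo p m, φ i x
        = (0 - (1 - 0) * exp (b/α*p) / (exp (b/α*m) - exp (b/α*p)))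
          + ((1 - 0) / (exp (b/α*m) - exp (b/α*p))) * exp (b/α*x) := by
      intro x hx
      rw [(solL i hi1 hi2 x hx).1]; ring
    have hg'R : ∀ x ∈ Ioo m q, deriv (φ i) x
        = (0 - 1) * (b/α) / (exp (b/α*q) - exp (b/α*m)) * exp (b/α*x) :=
      fun x hx => (solR i hi1 hi2 x hx).2
    have hfR : ∀ x ∈ Ioo m q, φ i x
        = (1 + (0 - 1) * (0 - exp (b/α*m)) / (exp (b/α*q) - exp (b/α*m)))
          + ((0 - 1) / (exp (b/α*q) - exp (b/α*m))) * exp (b/α*x) := by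
      intro x hx
      rw [(solR i hi1 hi2 x hx).1]; ring
    have hT : ∀ᵐ x ∂(volume.restrict (Ioo (0:ℝ) 1)), x ∉ ({p, m, q} : Set ℝ) :=
      ae_restrict_of_ae (measure_eq_zero_iff_ae_notMem.1 ((Set.toFinite _).countable.measure_zero _))
    have hred := integral_reduce
      (G := fun x => α * deriv (φ i) x * deriv (φ i) x + b * deriv (φ i) x * φ i x)
      (S := Ioo p m ∪ Ioo m q)
      (measurableSet_Ioo.union measurableSet_Ioo)
      (fun x hx => by
        rcases hx with hx | hx
        · exact ⟨lt_of_le_of_lt hp0 hx.1, lt_of_lt_of_le hx.2 (hmq.le.trans hq1)⟩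
        · exact ⟨lt_of_le_of_lt (hp0.trans hpm.le) hx.1, lt_of_lt_of_le hx.2 hq1⟩)
      (by
        filter_upwards [hT] with x hxT hxS
        by_cases hxsupp : x ∈ Icc p q
        · exfalso
          simp only [Set.mem_insert_iff, Set.mem_singleton_iff, not_or] at hxT
          simp only [Set.mem_union, Set.mem_Ioo, not_or, not_and, not_lt] at hxS
          obtain ⟨hn1, hn2, hn3⟩ := hxT
          obtain ⟨ha1, ha2⟩ := hxsupp
          have h1 : m ≤ x := hxS.1 (lt_of_le_of_ne ha1 (Ne.symm hn1))
          have h2 : q ≤ x := hxS.2 (lt_of_le_of_ne h1 (Ne.symm hn2))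
          exact absurd (lt_of_le_of_ne ha2 hn3) (not_lt.2 h2)
        · obtain ⟨hz1, hz2⟩ := hz i hi1 hi2 x hxsupp
          show α * deriv (φ i) x * deriv (φ i) x + b * deriv (φ i) x * φ i x = 0
          rw [hz1, hz2]; ring)
    have hIL := block_integrable (b/α) α b _ _ _ _ p m hpm.le (φ i) (φ i) hg'L hg'L hfL
    have hIR := block_integrable (b/α) α b _ _ _ _ m q hmq.le (φ i) (φ i) hg'R hg'R hfR
    have hVL := block_integral (b/α) α b _ _ _ _ p m hβ hpm.le (φ i) (φ i) hg'L hg'L hfL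
    have hVR := block_integral (b/α) α b _ _ _ _ m q hβ hmq.le (φ i) (φ i) hg'R hg'R hfR
    rw [hred, integral_Ioo_union hIL hIR, hVL, hVR, coth_to_exp α b H hα hb hH0,
      hweq, hveq]
    generalize hug : exp (b/α*p) = u at hu0 ⊢
    generalize hEg : exp (b*H/α) = E at hE0 hE1 ⊢
    have hvu' : u*E - u ≠ 0 := by
      rw [show u*E - u = u*(E-1) by ring]; exact mul_ne_zero hu0 hE1
    have hwv' : u*E*E - u*E ≠ 0 := by
      rw [show u*E*E - u*E = u*E*(E-1) by ring]; exact mul_ne_zero (mul_ne_zero hu0 hE0) hE1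
    field_simp
    ring
  · -- sub-diagonal
    intro i hi2 hiN
    obtain ⟨k, rfl⟩ : ∃ k, i = k + 1 := ⟨i-1, by omega⟩
    simp only [Nat.add_sub_cancel]
    have hk1 : 1 ≤ k := by omega
    have hk2 : k ≤ N - 1 := by omega
    have hk1' : 1 ≤ k+1 := by omega
    have hk2' : k+1 ≤ N - 1 := hiN
    have hk1r : (1:ℝ) ≤ (k:ℝ) := by exact_mod_cast hk1
    have hkNr : (k:ℝ)+1 ≤ (N:ℝ) := by exact_mod_cast (by omega : k+1 ≤ N)
    have cast1 : ((k+1:ℕ):ℝ) = (k:ℝ)+1 := by push_cast; ring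
    have sL := solL (k+1) hk1' hk2'
    rw [cast1, add_sub_cancel_right] at sL
    have sR := solR k hk1 hk2
    have hzk1 := hz (k+1) hk1' hk2'
    rw [cast1, add_sub_cancel_right] at hzk1
    set p := (k:ℝ)*H with hp
    set m := ((k:ℝ)+1)*H with hm
    have hpm : p < m := hstep _ _ (by linarith)
    have hp0 : 0 ≤ p := mul_nonneg (by linarith) hH0.le
    have hm1 : m ≤ 1 := by rw [← hNH, hm]; exact mul_le_mul_of_nonneg_right hkNr hH0.le
    have hu0 : exp (b/α*p) ≠ 0 := (Real.exp_pos _).ne'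
    have hE0 : exp (b*H/α) ≠ 0 := (Real.exp_pos _).ne'
    have hveq : exp (b/α*m) = exp (b/α*p) * exp (b*H/α) := by
      rw [← Real.exp_add]; congr 1; rw [hm, hp]; ring
    have hg' : ∀ x ∈ Ioo p m, deriv (φ k) x
        = (0 - 1) * (b/α) / (exp (b/α*m) - exp (b/α*p)) * exp (b/α*x) :=
      fun x hx => (sR x hx).2
    have hf' : ∀ x ∈ Ioo p m, deriv (φ (k+1)) x
        = (1 - 0) * (b/α) / (exp (b/α*m) - exp (b/α*p)) * exp (b/α*x) :=
      fun x hx => (sL x hx).2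
    have hf : ∀ x ∈ Ioo p m, φ (k+1) x
        = (0 - (1 - 0) * exp (b/α*p) / (exp (b/α*m) - exp (b/α*p)))
          + ((1 - 0) / (exp (b/α*m) - exp (b/α*p))) * exp (b/α*x) := by
      intro x hx
      rw [(sL x hx).1]; ring
    have hT : ∀ᵐ x ∂(volume.restrict (Ioo (0:ℝ) 1)),
        x ∉ ({((k:ℝ)-1)*H, p, m} : Set ℝ) :=
      ae_restrict_of_ae (measure_eq_zero_iff_ae_notMem.1 ((Set.toFinite _).countable.measure_zero _))
    have hred := integral_reduce
      (G := fun x => α * deriv (φ k) x * deriv (φ (k+1)) x + b * deriv (φ k) x * φ (k+1) x)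
      (S := Ioo p m) measurableSet_Ioo
      (fun x hx => ⟨lt_of_le_of_lt hp0 hx.1, lt_of_lt_of_le hx.2 hm1⟩)
      (by
        filter_upwards [hT] with x hxT hxS
        show α * deriv (φ k) x * deriv (φ (k+1)) x + b * deriv (φ k) x * φ (k+1) x = 0
        simp only [Set.mem_insert_iff, Set.mem_singleton_iff, not_or] at hxT
        obtain ⟨hn0, hn1, hn2⟩ := hxT
        by_cases hxk : x ∈ Icc (((k:ℝ)-1)*H) (((k:ℝ)+1)*H)
        · have hxlt : x < p := by
            simp only [Set.mem_Ioo, not_and, not_lt] at hxS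
            rcases lt_or_ge x p with h | h
            · exact h
            · have hxp : p < x := lt_of_le_of_ne h (Ne.symm hn1)
              have := hxS hxp
              rw [hm] at this
              exact absurd (lt_of_le_of_ne hxk.2 hn2) (not_lt.2 this)
          have hxout : x ∉ Icc ((k:ℝ)*H) (((k:ℝ)+1+1)*H) := fun hc => absurd hc.1 (not_le.2 hxlt)
          obtain ⟨hz1, hz2⟩ := hzk1 x hxout
          rw [hz1, hz2]; ring
        · have hz2 := (hz k hk1 hk2 x hxk).2
          rw [hz2]; ring)
    have hVal := block_integral (b/α) α b _ _ _ _ p m hβ hpm.le (φ (k+1)) (φ k) hg' hf' hf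
    rw [hred, hVal, hveq]
    generalize exp (b/α*p) = u at hu0 ⊢
    generalize exp (b*H/α) = E at hE0 hE1 ⊢
    have hvu' : u*E - u ≠ 0 := by
      rw [show u*E - u = u*(E-1) by ring]; exact mul_ne_zero hu0 hE1
    field_simp
    ring
  · -- super-diagonal
    intro i hi1 hiN
    have hi1' : (1:ℝ) ≤ (i:ℝ) := by exact_mod_cast hi1
    have hiNr : (i:ℝ)+1 ≤ (N:ℝ) := by exact_mod_cast (by omega : i+1 ≤ N)
    have hi2 : i ≤ N - 1 := by omega
    have hj1 : 1 ≤ i+1 := by omega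
    have cast1 : ((i+1:ℕ):ℝ) = (i:ℝ)+1 := by push_cast; ring
    have sL := solL (i+1) hj1 hiN
    rw [cast1, add_sub_cancel_right] at sL
    have sR := solR i hi1 hi2
    have hzi1 := hz (i+1) hj1 hiN
    rw [cast1, add_sub_cancel_right] at hzi1
    set p := (i:ℝ)*H with hp
    set m := ((i:ℝ)+1)*H with hm
    have hpm : p < m := hstep _ _ (by linarith)
    have hp0 : 0 ≤ p := mul_nonneg (by linarith) hH0.le
    have hm1 : m ≤ 1 := by rw [← hNH, hm]; exact mul_le_mul_of_nonneg_right hiNr hH0.le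
    have hu0 : exp (b/α*p) ≠ 0 := (Real.exp_pos _).ne'
    have hE0 : exp (b*H/α) ≠ 0 := (Real.exp_pos _).ne'
    have hveq : exp (b/α*m) = exp (b/α*p) * exp (b*H/α) := by
      rw [← Real.exp_add]; congr 1; rw [hm, hp]; ring
    have hg' : ∀ x ∈ Ioo p m, deriv (φ (i+1)) x
        = (1 - 0) * (b/α) / (exp (b/α*m) - exp (b/α*p)) * exp (b/α*x) :=
      fun x hx => (sL x hx).2
    have hf' : ∀ x ∈ Ioo p m, deriv (φ i) x
        = (0 - 1) * (b/α) / (exp (b/α*m) - exp (b/α*p)) * exp (b/α*x) :=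
      fun x hx => (sR x hx).2
    have hf : ∀ x ∈ Ioo p m, φ i x
        = (1 + (0 - 1) * (0 - exp (b/α*p)) / (exp (b/α*m) - exp (b/α*p)))
          + ((0 - 1) / (exp (b/α*m) - exp (b/α*p))) * exp (b/α*x) := by
      intro x hx
      rw [(sR x hx).1]; ring
    have hT : ∀ᵐ x ∂(volume.restrict (Ioo (0:ℝ) 1)),
        x ∉ ({p, m} : Set ℝ) :=
      ae_restrict_of_ae (measure_eq_zero_iff_ae_notMem.1 ((Set.toFinite _).countable.measure_zero _))
    have hred := integral_reduce
      (G := fun x => α * deriv (φ (i+1)) x * deriv (φ i) x + b * deriv (φ (i+1)) x * φ i x)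
      (S := Ioo p m) measurableSet_Ioo
      (fun x hx => ⟨lt_of_le_of_lt hp0 hx.1, lt_of_lt_of_le hx.2 hm1⟩)
      (by
        filter_upwards [hT] with x hxT hxS
        show α * deriv (φ (i+1)) x * deriv (φ i) x + b * deriv (φ (i+1)) x * φ i x = 0
        simp only [Set.mem_insert_iff, Set.mem_singleton_iff, not_or] at hxT
        obtain ⟨hn1, hn2⟩ := hxT
        by_cases hxk : x ∈ Icc ((i:ℝ)*H) (((i:ℝ)+1+1)*H)
        · have hxgt : m < x := by
            simp only [Set.mem_Ioo, not_and, not_lt] at hxS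
            have hxp : p < x := lt_of_le_of_ne hxk.1 (Ne.symm hn1)
            exact lt_of_le_of_ne (hxS hxp) (Ne.symm hn2)
          have hxout : x ∉ Icc (((i:ℝ)-1)*H) (((i:ℝ)+1)*H) := fun hc =>
            absurd hc.2 (not_le.2 hxgt)
          obtain ⟨hz1, hz2⟩ := hz i hi1 hi2 x hxout
          rw [hz1, hz2]; ring
        · have hz2 := (hzi1 x hxk).2
          rw [hz2]; ring)
    have hVal := block_integral (b/α) α b _ _ _ _ p m hβ hpm.le (φ i) (φ (i+1)) hg' hf' hf
    rw [hred, hVal, hveq]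
    generalize exp (b/α*p) = u at hu0 ⊢
    generalize exp (b*H/α) = E at hE0 hE1 ⊢
    have hvu' : u*E - u ≠ 0 := by
      rw [show u*E - u = u*(E-1) by ring]; exact mul_ne_zero hu0 hE1
    field_simp
    ring
  · -- far apart
    intro i j hi1 hi2 hj1 hj2 hfar
    apply integral_eq_zero_of_ae
    have hT : ∀ᵐ x ∂(volume.restrict (Ioo (0:ℝ) 1)),
        x ∉ ({((j:ℝ)-1)*H, ((j:ℝ)+1)*H} : Set ℝ) :=
      ae_restrict_of_ae (measure_eq_zero_iff_ae_notMem.1 ((Set.toFinite _).countable.measure_zero _))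
    filter_upwards [hT] with x hxT
    show α * deriv (φ j) x * deriv (φ i) x + b * deriv (φ j) x * φ i x = 0
    simp only [Set.mem_insert_iff, Set.mem_singleton_iff, not_or] at hxT
    by_cases hxj : x ∈ Icc (((j:ℝ)-1)*H) (((j:ℝ)+1)*H)
    · have hxi : x ∉ Icc (((i:ℝ)-1)*H) (((i:ℝ)+1)*H) := by
        rcases hfar with hfar | hfar
        · have hcast : (i:ℝ)+2 ≤ (j:ℝ) := by exact_mod_cast (by omega : i+2 ≤ j)
          have h2 : ((i:ℝ)+1)*H ≤ ((j:ℝ)-1)*H :=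
            mul_le_mul_of_nonneg_right (by linarith) hH0.le
          intro hc
          exact hxT.1 (le_antisymm (le_trans hc.2 h2) hxj.1)
        · have hcast : (j:ℝ)+2 ≤ (i:ℝ) := by exact_mod_cast (by omega : j+2 ≤ i)
          have h2 : ((j:ℝ)+1)*H ≤ ((i:ℝ)-1)*H :=
            mul_le_mul_of_nonneg_right (by linarith) hH0.le
          intro hc
          exact hxT.2 (le_antisymm hxj.2 (le_trans h2 hc.1))
      obtain ⟨hz1, hz2⟩ := hz i hi1 hi2 x hxi
      rw [hz1, hz2]; ring
    · have hz2 := (hz j hj1 hj2 x hxj).2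
      rw [hz2]; ring
end
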